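/- arXiv:1307.1770 — 7 statements merged into one kernel-verified Lean document; each statement's English description precedes it below -/
import Mathlib

section
/- Let Φ ∈ ℝ^{M×N} and let I, J ⊆ {1,…,N} be disjoint nonempty index sets with |I|+|J| ≤ N. Then for every vector z ∈ ℝ^{|J|}, one has ‖Φ_I^T Φ_J z‖₂ ≤ δ_{|I|+|J|} ‖z‖₂, where δ_{|I|+|J|} is the restricted isometry constant of Φ of order |I|+|J|. -/
open scoped BigOperators
open Matrix

/-- Euclidean norm of a finite-dimensional real vector. -/
noncomputable def enorm {ι : Type*} [Fintype ι] (v : ι → ℝ) : ℝ :=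
  Real.sqrt (∑ i, v i ^ 2)

/-- `x` has at most `L` nonzero entries. -/
def SparseLe {N : ℕ} (L : ℕ) (x : Fin N → ℝ) : Prop :=
  (Finset.univ.filter fun i => x i ≠ 0).card ≤ L

/-- The restricted isometry constant of order `L`: the smallest `δ ≥ 0` such that
`(1-δ)‖x‖² ≤ ‖Φx‖² ≤ (1+δ)‖x‖²` for all `x` with at most `L` nonzero entries. -/
noncomputable def RIC {M N : ℕ} (Φ : Matrix (Fin M) (Fin N) ℝ) (L : ℕ) : ℝ :=
  sInf {δ : ℝ | 0 ≤ δ ∧ ∀ x : Fin N → ℝ, SparseLe L x →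
    (1 - δ) * ∑ i, x i ^ 2 ≤ ∑ i, (Φ.mulVec x) i ^ 2 ∧
      ∑ i, (Φ.mulVec x) i ^ 2 ≤ (1 + δ) * ∑ i, x i ^ 2}

/-- The column submatrix of `Φ` with columns indexed by the finite set `I`. -/
def colSub {M N : ℕ} (Φ : Matrix (Fin M) (Fin N) ℝ) (I : Finset (Fin N)) :
    Matrix (Fin M) {j // j ∈ I} ℝ :=
  Matrix.of fun i j => Φ i j.val

namespace RICaux

variable {M N : ℕ}

/-- Extension of a vector on a subset by zero. -/
def ext (S : Finset (Fin N)) (x : {j // j ∈ S} → ℝ) : Fin N → ℝ :=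
  fun i => if h : i ∈ S then x ⟨i, h⟩ else 0

lemma ext_notmem {S : Finset (Fin N)} (x : {j // j ∈ S} → ℝ) {i : Fin N} (h : i ∉ S) :
    ext S x i = 0 := dif_neg h

lemma sum_over (S : Finset (Fin N)) (x : {j // j ∈ S} → ℝ) (f : Fin N → ℝ → ℝ)
    (hf : ∀ i, f i 0 = 0) :
    ∑ i, f i (ext S x i) = ∑ j : {j // j ∈ S}, f j.val (x j) := by
  rw [← Finset.sum_subset (Finset.subset_univ S) (fun i _ hi => by
    rw [ext_notmem x hi, hf])]
  rw [show (∑ j : {j // j ∈ S}, f j.val (x j)) = ∑ j ∈ S.attach, f j.val (x j) from rfl]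
  rw [← Finset.sum_attach S (fun i => f i (ext S x i))]
  apply Finset.sum_congr rfl
  intro j _
  congr 1
  exact dif_pos j.2

lemma mulVec_ext (Φ : Matrix (Fin M) (Fin N) ℝ) (S : Finset (Fin N)) (x : {j // j ∈ S} → ℝ) :
    Φ.mulVec (ext S x) = (colSub Φ S).mulVec x := by
  funext i
  simp only [Matrix.mulVec, dotProduct, colSub, Matrix.of_apply]
  exact sum_over S x (fun j t => Φ i j * t) (fun j => mul_zero _)

lemma sumsq_ext (S : Finset (Fin N)) (x : {j // j ∈ S} → ℝ) :
    ∑ i, (ext S x i) ^ 2 = ∑ j, x j ^ 2 :=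
  sum_over S x (fun _ t => t ^ 2) (fun _ => by norm_num)

lemma cross {I J : Finset (Fin N)} (hIJ : Disjoint I J)
    (u : {j // j ∈ I} → ℝ) (v : {j // j ∈ J} → ℝ) (i : Fin N) :
    ext I u i * ext J v i = 0 := by
  by_cases h : i ∈ I
  · rw [ext_notmem v (Finset.disjoint_left.mp hIJ h), mul_zero]
  · rw [ext_notmem u h, zero_mul]

lemma sparse_mix (I J : Finset (Fin N)) (u : {j // j ∈ I} → ℝ) (v : {j // j ∈ J} → ℝ)
    (ε : ℝ) : SparseLe (I.card + J.card) (fun i => ext I u i + ε * ext J v i) := by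
  unfold SparseLe
  calc (Finset.univ.filter fun i => ext I u i + ε * ext J v i ≠ 0).card
      ≤ (I ∪ J).card := by
        apply Finset.card_le_card
        intro i hi
        simp only [Finset.mem_filter] at hi
        by_contra h
        simp only [Finset.mem_union, not_or] at h
        exact hi.2 (by rw [ext_notmem u h.1, ext_notmem v h.2, mul_zero, add_zero])
    _ ≤ I.card + J.card := Finset.card_union_le _ _

lemma RIC_mem (Φ : Matrix (Fin M) (Fin N) ℝ) (L : ℕ) :
    0 ≤ RIC Φ L ∧ ∀ x : Fin N → ℝ, SparseLe L x →
      (1 - RIC Φ L) * ∑ i, x i ^ 2 ≤ ∑ i, (Φ.mulVec x) i ^ 2 ∧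
      ∑ i, (Φ.mulVec x) i ^ 2 ≤ (1 + RIC Φ L) * ∑ i, x i ^ 2 := by
  set Sδ := {δ : ℝ | 0 ≤ δ ∧ ∀ x : Fin N → ℝ, SparseLe L x →
    (1 - δ) * ∑ i, x i ^ 2 ≤ ∑ i, (Φ.mulVec x) i ^ 2 ∧
      ∑ i, (Φ.mulVec x) i ^ 2 ≤ (1 + δ) * ∑ i, x i ^ 2} with hSδ
  have hne : Sδ.Nonempty := by
    set C := ∑ i, ∑ j, Φ i j ^ 2 with hC
    have hC0 : 0 ≤ C := Finset.sum_nonneg fun i _ => Finset.sum_nonneg fun j _ => sq_nonneg _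
    refine ⟨max 1 C, ?_, fun x _ => ⟨?_, ?_⟩⟩
    · exact le_trans zero_le_one (le_max_left _ _)
    · have hA : 0 ≤ ∑ i, x i ^ 2 := Finset.sum_nonneg fun i _ => sq_nonneg _
      have hB : 0 ≤ ∑ i, (Φ.mulVec x) i ^ 2 := Finset.sum_nonneg fun i _ => sq_nonneg _
      have : (1 : ℝ) - max 1 C ≤ 0 := by
        have := le_max_left (1:ℝ) C; linarith
      nlinarith
    · have hA : 0 ≤ ∑ i, x i ^ 2 := Finset.sum_nonneg fun i _ => sq_nonneg _
      have hstep : ∑ i, (Φ.mulVec x) i ^ 2 ≤ C * ∑ i, x i ^ 2 := by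
        rw [hC, Finset.sum_mul]
        apply Finset.sum_le_sum
        intro i _
        have := Finset.sum_mul_sq_le_sq_mul_sq Finset.univ (fun j => Φ i j) x
        simpa [Matrix.mulVec, dotProduct] using this
      have hCm : C ≤ max 1 C := le_max_right _ _
      nlinarith
  have hbd : BddBelow Sδ := ⟨0, fun δ hδ => hδ.1⟩
  have hset : Sδ = Set.Ici (0:ℝ) ∩ ⋂ x : Fin N → ℝ, ⋂ _ : SparseLe L x,
      ({δ : ℝ | (1 - δ) * ∑ i, x i ^ 2 ≤ ∑ i, (Φ.mulVec x) i ^ 2} ∩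
       {δ : ℝ | ∑ i, (Φ.mulVec x) i ^ 2 ≤ (1 + δ) * ∑ i, x i ^ 2}) := by
    ext δ
    simp only [hSδ, Set.mem_setOf_eq, Set.mem_inter_iff, Set.mem_Ici, Set.mem_iInter]
  have hcl : IsClosed Sδ := by
    rw [hset]
    refine isClosed_Ici.inter (isClosed_iInter fun x => isClosed_iInter fun _ => ?_)
    exact (isClosed_le (by fun_prop) continuous_const).inter
          (isClosed_le continuous_const (by fun_prop))
  have hmem : sInf Sδ ∈ Sδ := hcl.csInf_mem hne hbd
  have hRIC : RIC Φ L = sInf Sδ := rfl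
  rw [hRIC]
  exact hmem

lemma expand_sum (c : ℝ) (P Q : Fin M → ℝ) :
    ∑ i, (P i + c * Q i) ^ 2
      = ∑ i, P i ^ 2 + c ^ 2 * ∑ i, Q i ^ 2 + 2 * c * ∑ i, P i * Q i := by
  rw [Finset.mul_sum, Finset.mul_sum, ← Finset.sum_add_distrib, ← Finset.sum_add_distrib]
  apply Finset.sum_congr rfl
  intro i _
  ring

lemma key (Φ : Matrix (Fin M) (Fin N) ℝ) (I J : Finset (Fin N)) (hIJ : Disjoint I J)
    (u : {j // j ∈ I} → ℝ) (v : {j // j ∈ J} → ℝ) :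
    ∑ i, ((colSub Φ I).mulVec u) i * ((colSub Φ J).mulVec v) i
      ≤ RIC Φ (I.card + J.card) / 2 * (∑ j, u j ^ 2 + ∑ j, v j ^ 2) := by
  set L := I.card + J.card with hL
  set δ := RIC Φ L with hδ
  obtain ⟨hδ0, hRIP⟩ := RIC_mem Φ L
  set a := ext I u with ha
  set b := ext J v with hb
  have hcr : ∀ i, a i * b i = 0 := cross hIJ u v
  have hA : ∑ i, a i ^ 2 = ∑ j, u j ^ 2 := sumsq_ext I u
  have hB : ∑ i, b i ^ 2 = ∑ j, v j ^ 2 := sumsq_ext J v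
  have hsum_mix : ∀ c : ℝ, ∑ i, (a i + c * b i) ^ 2
      = ∑ j, u j ^ 2 + c ^ 2 * ∑ j, v j ^ 2 := by
    intro c
    rw [expand_sum, hA, hB]
    have : ∑ i, a i * b i = 0 := Finset.sum_eq_zero fun i _ => hcr i
    rw [this]; ring
  have hmul_mix : ∀ c : ℝ, Φ.mulVec (fun i => a i + c * b i)
      = fun i => ((colSub Φ I).mulVec u) i + c * ((colSub Φ J).mulVec v) i := by
    intro c
    have h1 : (fun i => a i + c * b i) = a + c • b := by
      funext i; simp [smul_eq_mul]
    rw [h1, Matrix.mulVec_add, Matrix.mulVec_smul, ha, hb, mulVec_ext, mulVec_ext]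
    funext i; simp [smul_eq_mul]
  have hp := (hRIP (fun i => a i + 1 * b i) (sparse_mix I J u v 1)).2
  have hm := (hRIP (fun i => a i + (-1) * b i) (sparse_mix I J u v (-1))).1
  rw [hsum_mix 1, hmul_mix 1, expand_sum] at hp
  rw [hsum_mix (-1), hmul_mix (-1), expand_sum] at hm
  set SP := ∑ i, ((colSub Φ I).mulVec u) i ^ 2
  set SQ := ∑ i, ((colSub Φ J).mulVec v) i ^ 2
  set X := ∑ i, ((colSub Φ I).mulVec u) i * ((colSub Φ J).mulVec v) i
  have hAnn : (0:ℝ) ≤ ∑ j, u j ^ 2 := Finset.sum_nonneg fun j _ => sq_nonneg _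
  have hBnn : (0:ℝ) ≤ ∑ j, v j ^ 2 := Finset.sum_nonneg fun j _ => sq_nonneg _
  nlinarith [hp, hm]

end RICaux

open RICaux in
theorem stmt_2 {M N : ℕ} (Φ : Matrix (Fin M) (Fin N) ℝ) (I J : Finset (Fin N))
    (hI : I.Nonempty) (hJ : J.Nonempty) (hIJ : Disjoint I J)
    (hcard : I.card + J.card ≤ N) (z : {j // j ∈ J} → ℝ) :
    _root_.enorm ((colSub Φ I)ᵀ.mulVec ((colSub Φ J).mulVec z))
      ≤ RIC Φ (I.card + J.card) * _root_.enorm z := by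
  set L := I.card + J.card with hL
  set δ := RIC Φ L with hδ
  obtain ⟨hδ0, -⟩ := RIC_mem Φ L
  set w := (colSub Φ J).mulVec z with hw
  set y := (colSub Φ I)ᵀ.mulVec w with hy
  set Y := ∑ k, y k ^ 2 with hY
  set Z := ∑ j, z j ^ 2 with hZ
  have hYnn : 0 ≤ Y := Finset.sum_nonneg fun k _ => sq_nonneg _
  have hZnn : 0 ≤ Z := Finset.sum_nonneg fun j _ => sq_nonneg _
  have hiden : ∑ i, ((colSub Φ I).mulVec y) i * w i = Y := by
    have h1 : ((colSub Φ I).mulVec y) ⬝ᵥ w = w ⬝ᵥ ((colSub Φ I).mulVec y) :=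
      dotProduct_comm _ _
    have h2 : w ⬝ᵥ ((colSub Φ I).mulVec y) = (w ᵥ* (colSub Φ I)) ⬝ᵥ y :=
      Matrix.dotProduct_mulVec _ _ _
    have h3 : y = w ᵥ* (colSub Φ I) := by
      rw [hy, Matrix.mulVec_transpose]
    calc ∑ i, ((colSub Φ I).mulVec y) i * w i
        = ((colSub Φ I).mulVec y) ⬝ᵥ w := rfl
      _ = (w ᵥ* (colSub Φ I)) ⬝ᵥ y := by rw [h1, h2]
      _ = y ⬝ᵥ y := by rw [← h3]
      _ = Y := by simp [dotProduct, hY, sq]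
  have henorm_y : _root_.enorm y = Real.sqrt Y := rfl
  have henorm_z : _root_.enorm z = Real.sqrt Z := rfl
  rcases eq_or_lt_of_le hYnn with hY0 | hYpos
  · rw [henorm_y, henorm_z, ← hY0, Real.sqrt_zero]
    positivity
  rcases eq_or_lt_of_le hZnn with hZ0 | hZpos
  · exfalso
    have hzz : z = 0 := by
      funext j
      have := (Finset.sum_eq_zero_iff_of_nonneg (fun j _ => sq_nonneg (z j))).mp hZ0.symm
      have := this j (Finset.mem_univ j)
      exact pow_eq_zero_iff (two_ne_zero) |>.mp this
    have : y = 0 := by rw [hy, hw, hzz, Matrix.mulVec_zero, Matrix.mulVec_zero]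
    rw [hY, this] at hYpos
    simp at hYpos
  set sY := Real.sqrt Y with hsY
  set sZ := Real.sqrt Z with hsZ
  have hsYpos : 0 < sY := Real.sqrt_pos.mpr hYpos
  have hsZpos : 0 < sZ := Real.sqrt_pos.mpr hZpos
  have hsY2 : sY ^ 2 = Y := Real.sq_sqrt hYnn
  have hsZ2 : sZ ^ 2 = Z := Real.sq_sqrt hZnn
  have hkey := key Φ I J hIJ (sZ • y) (sY • z)
  have hlhs : ∑ i, ((colSub Φ I).mulVec (sZ • y)) i * ((colSub Φ J).mulVec (sY • z)) i
      = sZ * sY * Y := by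
    rw [Matrix.mulVec_smul, Matrix.mulVec_smul, ← hw]
    calc ∑ i, (sZ • (colSub Φ I).mulVec y) i * (sY • w) i
        = sZ * sY * ∑ i, ((colSub Φ I).mulVec y) i * w i := by
          rw [Finset.mul_sum]
          apply Finset.sum_congr rfl
          intro i _
          simp [smul_eq_mul]; ring
      _ = sZ * sY * Y := by rw [hiden]
  have hr1 : ∑ j, (sZ • y) j ^ 2 = sZ ^ 2 * Y := by
    simp [smul_eq_mul, mul_pow, Finset.mul_sum, hY]
  have hr2 : ∑ j, (sY • z) j ^ 2 = sY ^ 2 * Z := by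
    simp [smul_eq_mul, mul_pow, Finset.mul_sum, hZ]
  rw [hlhs, hr1, hr2, ← hL, ← hδ, ← hsY2, ← hsZ2] at hkey
  -- hkey : sZ * sY * Y ≤ δ / 2 * (sZ^2 * Y + sY^2 * Z)
  rw [henorm_y, henorm_z]
  -- goal : sY ≤ δ * sZ
  have hfin : sZ * sY * sY ^ 2 ≤ δ * sY ^ 2 * sZ ^ 2 := by nlinarith [hkey]
  have h4 : 0 < sY ^ 2 * sZ := by positivity
  nlinarith [hfin, h4, hsYpos, hsZpos, mul_pos h4 hsYpos, mul_pos h4 hsZpos]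
end

section
/- Let K and B be positive integers, let Φ ∈ ℝ^{M×N} with 3⌈K/2⌉ ≤ N and K+B ≤ N, and assume δ_{3⌈K/2⌉} > 0, where ⌈z⌉ denotes the smallest integer greater than or equal to z. Then the restricted isometry constants of Φ satisfy δ_{K+B} > δ_{3⌈K/2⌉}/3. -/
open scoped BigOperators
open Matrix

namespace RicAux

/-- The admissible set of RIP constants. -/
def RipSet {M N : ℕ} (Φ : Matrix (Fin M) (Fin N) ℝ) (L : ℕ) : Set ℝ :=
  {δ : ℝ | 0 ≤ δ ∧ ∀ x : Fin N → ℝ, SparseLe L x →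
    (1 - δ) * ∑ i, x i ^ 2 ≤ ∑ i, (Φ.mulVec x) i ^ 2 ∧
      ∑ i, (Φ.mulVec x) i ^ 2 ≤ (1 + δ) * ∑ i, x i ^ 2}

lemma RIC_eq {M N : ℕ} (Φ : Matrix (Fin M) (Fin N) ℝ) (L : ℕ) :
    RIC Φ L = sInf (RipSet Φ L) := rfl

lemma sq_sum_add {n : ℕ} (u v : Fin n → ℝ) :
    ∑ i, (u i + v i) ^ 2 = ∑ i, u i ^ 2 + ∑ i, v i ^ 2 + 2 * ∑ i, u i * v i := by
  rw [Finset.mul_sum, ← Finset.sum_add_distrib, ← Finset.sum_add_distrib]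
  exact Finset.sum_congr rfl fun i _ => by ring

lemma sq_sum_sub {n : ℕ} (u v : Fin n → ℝ) :
    ∑ i, (u i - v i) ^ 2 = ∑ i, u i ^ 2 + ∑ i, v i ^ 2 - 2 * ∑ i, u i * v i := by
  rw [Finset.mul_sum, ← Finset.sum_add_distrib, ← Finset.sum_sub_distrib]
  exact Finset.sum_congr rfl fun i _ => by ring

lemma F_add {M N : ℕ} (Φ : Matrix (Fin M) (Fin N) ℝ) (u v : Fin N → ℝ) :
    ∑ i, (Φ.mulVec (u + v)) i ^ 2 =
      ∑ i, (Φ.mulVec u) i ^ 2 + ∑ i, (Φ.mulVec v) i ^ 2 +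
        2 * ∑ i, (Φ.mulVec u) i * (Φ.mulVec v) i := by
  simp only [Matrix.mulVec_add, Pi.add_apply]
  exact sq_sum_add _ _

lemma F_sub {M N : ℕ} (Φ : Matrix (Fin M) (Fin N) ℝ) (u v : Fin N → ℝ) :
    ∑ i, (Φ.mulVec (u - v)) i ^ 2 =
      ∑ i, (Φ.mulVec u) i ^ 2 + ∑ i, (Φ.mulVec v) i ^ 2 -
        2 * ∑ i, (Φ.mulVec u) i * (Φ.mulVec v) i := by
  simp only [Matrix.mulVec_sub, Pi.sub_apply]
  exact sq_sum_sub _ _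

lemma sparse_of_subset {N L : ℕ} {y : Fin N → ℝ} {J : Finset (Fin N)}
    (h : ∀ j, y j ≠ 0 → j ∈ J) (hJ : J.card ≤ L) : SparseLe L y := by
  refine le_trans (Finset.card_le_card ?_) hJ
  intro j hj
  exact h j (Finset.mem_filter.mp hj).2

/-- Key lemma: if `δ` works for `2m`-sparse vectors then `2δ` works for `3m`-sparse ones. -/
lemma double_works {M N m : ℕ} (Φ : Matrix (Fin M) (Fin N) ℝ) {δ : ℝ}
    (h : ∀ y : Fin N → ℝ, SparseLe (2 * m) y →
      (1 - δ) * ∑ i, y i ^ 2 ≤ ∑ i, (Φ.mulVec y) i ^ 2 ∧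
        ∑ i, (Φ.mulVec y) i ^ 2 ≤ (1 + δ) * ∑ i, y i ^ 2)
    (x : Fin N → ℝ) (hx : SparseLe (3 * m) x) :
    (1 - 2 * δ) * ∑ i, x i ^ 2 ≤ ∑ i, (Φ.mulVec x) i ^ 2 ∧
      ∑ i, (Φ.mulVec x) i ^ 2 ≤ (1 + 2 * δ) * ∑ i, x i ^ 2 := by
  classical
  set T : Finset (Fin N) := Finset.univ.filter fun i => x i ≠ 0 with hTdef
  have hT : T.card ≤ 3 * m := hx
  obtain ⟨I₁, hI₁, hc₁⟩ := Finset.exists_subset_card_eq (s := T) (n := min m T.card) (min_le_right _ _)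
  obtain ⟨I₂, hI₂, hc₂⟩ :=
    Finset.exists_subset_card_eq (s := T \ I₁) (n := min m (T \ I₁).card) (min_le_right _ _)
  set I₃ : Finset (Fin N) := (T \ I₁) \ I₂ with hI₃def
  have hcard1 : I₁.card ≤ m := hc₁ ▸ min_le_left _ _
  have hcard2 : I₂.card ≤ m := hc₂ ▸ min_le_left _ _
  have hsd1 : (T \ I₁).card = T.card - I₁.card := Finset.card_sdiff_of_subset hI₁
  have hsd2 : I₃.card = (T \ I₁).card - I₂.card := Finset.card_sdiff_of_subset hI₂
  have hcard3 : I₃.card ≤ m := by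
    have h1 : I₁.card = min m T.card := hc₁
    have h2 : I₂.card = min m (T \ I₁).card := hc₂
    omega
  -- membership facts
  have hmem2 : ∀ j, j ∈ I₂ → j ∉ I₁ := fun j hj => (Finset.mem_sdiff.mp (hI₂ hj)).2
  have hmem3 : ∀ j, j ∈ I₃ → j ∉ I₁ ∧ j ∉ I₂ := by
    intro j hj
    have := Finset.mem_sdiff.mp hj
    exact ⟨(Finset.mem_sdiff.mp this.1).2, this.2⟩
  have hsub3 : I₃ ⊆ T := fun j hj => (Finset.mem_sdiff.mp ((Finset.mem_sdiff.mp hj).1)).1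
  have hsub2 : I₂ ⊆ T := fun j hj => (Finset.mem_sdiff.mp (hI₂ hj)).1
  have hcover : ∀ j, j ∈ T → j ∈ I₁ ∨ j ∈ I₂ ∨ j ∈ I₃ := by
    intro j hj
    by_cases h1 : j ∈ I₁
    · exact Or.inl h1
    by_cases h2 : j ∈ I₂
    · exact Or.inr (Or.inl h2)
    · exact Or.inr (Or.inr (by simp [hI₃def, Finset.mem_sdiff, hj, h1, h2]))
  have hxT : ∀ j, j ∉ T → x j = 0 := by
    intro j hj
    by_contra hne
    exact hj (by simp [hTdef, hne])
  -- the three pieces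
  set x₁ : Fin N → ℝ := fun j => if j ∈ I₁ then x j else 0 with hx₁def
  set x₂ : Fin N → ℝ := fun j => if j ∈ I₂ then x j else 0 with hx₂def
  set x₃ : Fin N → ℝ := fun j => if j ∈ I₃ then x j else 0 with hx₃def
  have hsupp1 : ∀ j, x₁ j ≠ 0 → j ∈ I₁ := by
    intro j hj; by_contra hc; exact hj (by simp [hx₁def, hc])
  have hsupp2 : ∀ j, x₂ j ≠ 0 → j ∈ I₂ := by
    intro j hj; by_contra hc; exact hj (by simp [hx₂def, hc])
  have hsupp3 : ∀ j, x₃ j ≠ 0 → j ∈ I₃ := by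
    intro j hj; by_contra hc; exact hj (by simp [hx₃def, hc])
  have heq : x = x₁ + x₂ + x₃ := by
    funext j
    simp only [Pi.add_apply]
    by_cases hjT : j ∈ T
    · rcases hcover j hjT with h1 | h2 | h3
      · have n2 : j ∉ I₂ := fun hc => hmem2 j hc h1
        have n3 : j ∉ I₃ := fun hc => (hmem3 j hc).1 h1
        simp [hx₁def, hx₂def, hx₃def, h1, n2, n3]
      · have n1 : j ∉ I₁ := hmem2 j h2
        have n3 : j ∉ I₃ := fun hc => (hmem3 j hc).2 h2
        simp [hx₁def, hx₂def, hx₃def, h2, n1, n3]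
      · have n1 : j ∉ I₁ := (hmem3 j h3).1
        have n2 : j ∉ I₂ := (hmem3 j h3).2
        simp [hx₁def, hx₂def, hx₃def, h3, n1, n2]
    · have hx0 : x j = 0 := hxT j hjT
      have n1 : j ∉ I₁ := fun hc => hjT (hI₁ hc)
      have n2 : j ∉ I₂ := fun hc => hjT (hsub2 hc)
      have n3 : j ∉ I₃ := fun hc => hjT (hsub3 hc)
      simp [hx₁def, hx₂def, hx₃def, n1, n2, n3, hx0]
  -- pointwise disjointness
  have hd12 : ∀ j, x₁ j * x₂ j = 0 := by
    intro j
    by_cases h1 : j ∈ I₁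
    · have : j ∉ I₂ := fun hc => hmem2 j hc h1
      simp [hx₂def, this]
    · simp [hx₁def, h1]
  have hd13 : ∀ j, x₁ j * x₃ j = 0 := by
    intro j
    by_cases h1 : j ∈ I₁
    · have : j ∉ I₃ := fun hc => (hmem3 j hc).1 h1
      simp [hx₃def, this]
    · simp [hx₁def, h1]
  have hd23 : ∀ j, x₂ j * x₃ j = 0 := by
    intro j
    by_cases h2 : j ∈ I₂
    · have : j ∉ I₃ := fun hc => (hmem3 j hc).2 h2
      simp [hx₃def, this]
    · simp [hx₂def, h2]
  -- sparsity of pairs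
  have hsp_pair : ∀ (u v : Fin N → ℝ), (∀ j, u j ≠ 0 → j ∈ I₁ ∨ j ∈ I₂ ∨ j ∈ I₃) → True := fun _ _ _ => trivial
  have hsparse_add : ∀ (u v : Fin N → ℝ) (Iu Iv : Finset (Fin N)),
      (∀ j, u j ≠ 0 → j ∈ Iu) → (∀ j, v j ≠ 0 → j ∈ Iv) →
      Iu.card ≤ m → Iv.card ≤ m → SparseLe (2 * m) (u + v) ∧ SparseLe (2 * m) (u - v) := by
    intro u v Iu Iv hu hv hcu hcv
    have hcard : (Iu ∪ Iv).card ≤ 2 * m :=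
      le_trans (Finset.card_union_le _ _) (by omega)
    constructor
    · refine sparse_of_subset ?_ hcard
      intro j hj
      by_cases h1 : u j = 0
      · have : v j ≠ 0 := by
          intro h2; exact hj (by simp [Pi.add_apply, h1, h2])
        exact Finset.mem_union_right _ (hv j this)
      · exact Finset.mem_union_left _ (hu j h1)
    · refine sparse_of_subset ?_ hcard
      intro j hj
      by_cases h1 : u j = 0
      · have : v j ≠ 0 := by
          intro h2; exact hj (by simp [Pi.sub_apply, h1, h2])
        exact Finset.mem_union_right _ (hv j this)
      · exact Finset.mem_union_left _ (hu j h1)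
  -- abbreviations
  set S1 := ∑ j, x₁ j ^ 2 with hS1
  set S2 := ∑ j, x₂ j ^ 2 with hS2
  set S3 := ∑ j, x₃ j ^ 2 with hS3
  set F1 := ∑ i, (Φ.mulVec x₁) i ^ 2 with hF1
  set F2 := ∑ i, (Φ.mulVec x₂) i ^ 2 with hF2
  set F3 := ∑ i, (Φ.mulVec x₃) i ^ 2 with hF3
  set G12 := ∑ i, (Φ.mulVec x₁) i * (Φ.mulVec x₂) i with hG12
  set G13 := ∑ i, (Φ.mulVec x₁) i * (Φ.mulVec x₃) i with hG13
  set G23 := ∑ i, (Φ.mulVec x₂) i * (Φ.mulVec x₃) i with hG23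
  -- pairwise RIP estimates
  have pair_est : ∀ (u v : Fin N → ℝ), (∀ j, u j * v j = 0) →
      SparseLe (2 * m) (u + v) → SparseLe (2 * m) (u - v) →
      ((1 - δ) * (∑ j, u j ^ 2 + ∑ j, v j ^ 2) ≤
          ∑ i, (Φ.mulVec u) i ^ 2 + ∑ i, (Φ.mulVec v) i ^ 2 +
            2 * ∑ i, (Φ.mulVec u) i * (Φ.mulVec v) i ∧
        ∑ i, (Φ.mulVec u) i ^ 2 + ∑ i, (Φ.mulVec v) i ^ 2 +
            2 * ∑ i, (Φ.mulVec u) i * (Φ.mulVec v) i ≤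
          (1 + δ) * (∑ j, u j ^ 2 + ∑ j, v j ^ 2)) ∧
      ((1 - δ) * (∑ j, u j ^ 2 + ∑ j, v j ^ 2) ≤
          ∑ i, (Φ.mulVec u) i ^ 2 + ∑ i, (Φ.mulVec v) i ^ 2 -
            2 * ∑ i, (Φ.mulVec u) i * (Φ.mulVec v) i ∧
        ∑ i, (Φ.mulVec u) i ^ 2 + ∑ i, (Φ.mulVec v) i ^ 2 -
            2 * ∑ i, (Φ.mulVec u) i * (Φ.mulVec v) i ≤
          (1 + δ) * (∑ j, u j ^ 2 + ∑ j, v j ^ 2)) := by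
    intro u v hd hadd hsub
    have hScross : ∑ j, u j * v j = 0 := by
      rw [Finset.sum_congr rfl fun j _ => hd j]; simp
    have hSadd : ∑ j, (u + v) j ^ 2 = ∑ j, u j ^ 2 + ∑ j, v j ^ 2 := by
      simp only [Pi.add_apply]
      rw [sq_sum_add, hScross]; ring
    have hSsub : ∑ j, (u - v) j ^ 2 = ∑ j, u j ^ 2 + ∑ j, v j ^ 2 := by
      simp only [Pi.sub_apply]
      rw [sq_sum_sub, hScross]; ring
    have ha := h (u + v) hadd
    have hb := h (u - v) hsub
    rw [hSadd, F_add] at ha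
    rw [hSsub, F_sub] at hb
    exact ⟨ha, hb⟩
  obtain ⟨hsp12a, hsp12b⟩ := hsparse_add x₁ x₂ I₁ I₂ hsupp1 hsupp2 hcard1 hcard2
  obtain ⟨hsp13a, hsp13b⟩ := hsparse_add x₁ x₃ I₁ I₃ hsupp1 hsupp3 hcard1 hcard3
  obtain ⟨hsp23a, hsp23b⟩ := hsparse_add x₂ x₃ I₂ I₃ hsupp2 hsupp3 hcard2 hcard3
  obtain ⟨⟨p12a, p12b⟩, ⟨m12a, m12b⟩⟩ := pair_est x₁ x₂ hd12 hsp12a hsp12b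
  obtain ⟨⟨p13a, p13b⟩, ⟨m13a, m13b⟩⟩ := pair_est x₁ x₃ hd13 hsp13a hsp13b
  obtain ⟨⟨p23a, p23b⟩, ⟨m23a, m23b⟩⟩ := pair_est x₂ x₃ hd23 hsp23a hsp23b
  -- expand the totals
  have hStot : ∑ j, x j ^ 2 = S1 + S2 + S3 := by
    rw [heq]
    simp only [Pi.add_apply]
    have hpt : ∀ j, (x₁ j + x₂ j + x₃ j) ^ 2 = x₁ j ^ 2 + x₂ j ^ 2 + x₃ j ^ 2 := by
      intro j
      have h1 := hd12 j; have h2 := hd13 j; have h3 := hd23 j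
      linear_combination 2 * h1 + 2 * h2 + 2 * h3
    rw [Finset.sum_congr rfl fun j _ => hpt j]
    rw [Finset.sum_add_distrib, Finset.sum_add_distrib]
  have hFtot : ∑ i, (Φ.mulVec x) i ^ 2 = F1 + F2 + F3 + 2 * (G12 + G13 + G23) := by
    rw [heq]
    have e1 : Φ.mulVec (x₁ + x₂ + x₃) = Φ.mulVec (x₁ + x₂) + Φ.mulVec x₃ := by
      rw [← Matrix.mulVec_add]
    rw [e1]
    have e2 : ∀ i, (Φ.mulVec (x₁ + x₂) + Φ.mulVec x₃) i ^ 2 =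
        (Φ.mulVec (x₁ + x₂)) i ^ 2 + (Φ.mulVec x₃) i ^ 2 +
          2 * ((Φ.mulVec (x₁ + x₂)) i * (Φ.mulVec x₃) i) := fun i => by
      simp only [Pi.add_apply]; ring
    rw [Finset.sum_congr rfl fun i _ => e2 i]
    rw [Finset.sum_add_distrib, Finset.sum_add_distrib]
    have e3 : ∑ i, (Φ.mulVec (x₁ + x₂)) i ^ 2 = F1 + F2 + 2 * G12 := F_add Φ x₁ x₂
    have e4 : ∑ i, 2 * ((Φ.mulVec (x₁ + x₂)) i * (Φ.mulVec x₃) i) =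
        2 * (G13 + G23) := by
      rw [hG13, hG23, ← Finset.mul_sum, ← Finset.sum_add_distrib]
      congr 1
      refine Finset.sum_congr rfl fun i _ => ?_
      rw [Matrix.mulVec_add]
      simp only [Pi.add_apply]; ring
    rw [e3, e4]; ring
  rw [hStot, hFtot]
  constructor
  · linarith
  · linarith

/-- A concrete element of every `RipSet`. -/
lemma big_mem {M N : ℕ} (Φ : Matrix (Fin M) (Fin N) ℝ) (L : ℕ) :
    (1 + ∑ i, ∑ j, Φ i j ^ 2) ∈ RipSet Φ L := by
  have hΦ : 0 ≤ ∑ i, ∑ j, Φ i j ^ 2 :=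
    Finset.sum_nonneg fun i _ => Finset.sum_nonneg fun j _ => sq_nonneg _
  refine ⟨by linarith, fun x _ => ?_⟩
  have hS : 0 ≤ ∑ j, x j ^ 2 := Finset.sum_nonneg fun j _ => sq_nonneg _
  have hF : 0 ≤ ∑ i, (Φ.mulVec x) i ^ 2 := Finset.sum_nonneg fun i _ => sq_nonneg _
  constructor
  · nlinarith
  · have key : ∀ i, (Φ.mulVec x) i ^ 2 ≤ (∑ j, Φ i j ^ 2) * ∑ j, x j ^ 2 := by
      intro i
      have : (Φ.mulVec x) i = ∑ j, Φ i j * x j := by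
        simp [Matrix.mulVec, dotProduct]
      rw [this]
      exact Finset.sum_mul_sq_le_sq_mul_sq _ _ _
    calc ∑ i, (Φ.mulVec x) i ^ 2 ≤ ∑ i, (∑ j, Φ i j ^ 2) * ∑ j, x j ^ 2 :=
          Finset.sum_le_sum fun i _ => key i
      _ = (∑ i, ∑ j, Φ i j ^ 2) * ∑ j, x j ^ 2 := by rw [← Finset.sum_mul]
      _ ≤ (1 + (1 + ∑ i, ∑ j, Φ i j ^ 2)) * ∑ j, x j ^ 2 := by nlinarith

end RicAux

theorem stmt_3 {M N : ℕ} (Φ : Matrix (Fin M) (Fin N) ℝ) (K B : ℕ)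
    (hK : 0 < K) (hB : 0 < B)
    (hN1 : 3 * ((K + 1) / 2) ≤ N) (hN2 : K + B ≤ N)
    (hpos : 0 < RIC Φ (3 * ((K + 1) / 2))) :
    RIC Φ (K + B) > RIC Φ (3 * ((K + 1) / 2)) / 3 := by
  classical
  set m := (K + 1) / 2 with hm
  have hBdd : ∀ L, BddBelow (RicAux.RipSet Φ L) := fun L => ⟨0, fun δ hδ => hδ.1⟩
  have hne : (RicAux.RipSet Φ (K + B)).Nonempty := ⟨_, RicAux.big_mem Φ (K + B)⟩
  have key : ∀ δ ∈ RicAux.RipSet Φ (K + B), RIC Φ (3 * m) ≤ 2 * δ := by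
    intro δ hδ
    have h2 : ∀ y : Fin N → ℝ, SparseLe (2 * m) y →
        (1 - δ) * ∑ i, y i ^ 2 ≤ ∑ i, (Φ.mulVec y) i ^ 2 ∧
          ∑ i, (Φ.mulVec y) i ^ 2 ≤ (1 + δ) * ∑ i, y i ^ 2 := by
      intro y hy
      refine hδ.2 y ?_
      unfold SparseLe at hy ⊢
      omega
    have h3 : (2 * δ) ∈ RicAux.RipSet Φ (3 * m) := by
      refine ⟨by linarith [hδ.1], fun x hx => ?_⟩
      exact RicAux.double_works Φ h2 x hx
    rw [RicAux.RIC_eq]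
    exact csInf_le (hBdd _) h3
  have hge : RIC Φ (3 * m) / 2 ≤ RIC Φ (K + B) := by
    rw [RicAux.RIC_eq Φ (K + B)]
    apply le_csInf hne
    intro δ hδ
    have := key δ hδ
    linarith
  linarith
end

section
/- Let Φ ∈ ℝ^{M×N} with columns φ_j, and let x ∈ ℝ^N have support T with |T| = K. Set y = Φx. Let T^b ⊆ {1,…,N} be an index set with n_c = |T^b ∩ T| < K and n_f = |T^b \ T|, and let r^b = y − Φ_{T^b} x̂, where x̂ minimizes ‖y − Φ_{T^b} z‖₂ over z ∈ ℝ^{|T^b|} (the residue of the orthogonal projection of y onto the column span of Φ_{T^b}). Let B be a positive integer with K+n_f+B ≤ N, and let ΔT be a set of B indices maximizing Σ_{j∈J} ⟨φ_j, r^b⟩² over all J ⊆ {1,…,N} with |J| = B. If the restricted isometry constant of Φ satisfies δ_{K+n_f+B} < min( √B/(√(K−n_c)+√B), 1/2 ), then ΔT ∩ (T \ T^b) ≠ ∅. -/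
open scoped BigOperators
open Matrix

lemma sparse_of_subset {N L : ℕ} {f : Fin N → ℝ} {s : Finset (Fin N)}
    (h : ∀ j, j ∉ s → f j = 0) (hs : s.card ≤ L) : SparseLe L f := by
  refine le_trans (Finset.card_le_card ?_) hs
  intro j hj
  simp only [Finset.mem_filter] at hj
  by_contra hjs
  exact hj.2 (h j hjs)

lemma ric_nonempty_aux {M N : ℕ} (Φ : Matrix (Fin M) (Fin N) ℝ) (L : ℕ) :
    ((∑ i, ∑ j, Φ i j ^ 2) + 1) ∈ {δ : ℝ | 0 ≤ δ ∧ ∀ x : Fin N → ℝ, SparseLe L x →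
    (1 - δ) * ∑ i, x i ^ 2 ≤ ∑ i, (Φ.mulVec x) i ^ 2 ∧
      ∑ i, (Φ.mulVec x) i ^ 2 ≤ (1 + δ) * ∑ i, x i ^ 2} := by
  set F := ∑ i, ∑ j, Φ i j ^ 2 with hF
  have hF0 : 0 ≤ F := Finset.sum_nonneg fun i _ => Finset.sum_nonneg fun j _ => sq_nonneg _
  have hX : ∀ x : Fin N → ℝ, (0:ℝ) ≤ ∑ i, x i ^ 2 :=
    fun x => Finset.sum_nonneg fun i _ => sq_nonneg _
  refine ⟨by linarith, fun x _ => ?_⟩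
  have hP : (0:ℝ) ≤ ∑ i, (Φ.mulVec x) i ^ 2 := Finset.sum_nonneg fun i _ => sq_nonneg _
  constructor
  · have : (1 - (F + 1)) * ∑ i, x i ^ 2 ≤ 0 :=
      mul_nonpos_of_nonpos_of_nonneg (by linarith) (hX x)
    linarith
  · have hcs : ∀ i, (Φ.mulVec x) i ^ 2 ≤ (∑ j, Φ i j ^ 2) * ∑ j, x j ^ 2 := by
      intro i
      exact Finset.sum_mul_sq_le_sq_mul_sq Finset.univ (fun j => Φ i j) x
    calc ∑ i, (Φ.mulVec x) i ^ 2 ≤ ∑ i, (∑ j, Φ i j ^ 2) * ∑ j, x j ^ 2 :=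
          Finset.sum_le_sum fun i _ => hcs i
      _ = F * ∑ j, x j ^ 2 := by rw [← Finset.sum_mul]
      _ ≤ (1 + (F + 1)) * ∑ j, x j ^ 2 := by
          apply mul_le_mul_of_nonneg_right (by linarith) (hX x)

lemma ric_spec {M N : ℕ} (Φ : Matrix (Fin M) (Fin N) ℝ) (L : ℕ) :
    0 ≤ RIC Φ L ∧ ∀ x : Fin N → ℝ, SparseLe L x →
      (1 - RIC Φ L) * ∑ i, x i ^ 2 ≤ ∑ i, (Φ.mulVec x) i ^ 2 ∧
      ∑ i, (Φ.mulVec x) i ^ 2 ≤ (1 + RIC Φ L) * ∑ i, x i ^ 2 := by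
  set S := {δ : ℝ | 0 ≤ δ ∧ ∀ x : Fin N → ℝ, SparseLe L x →
    (1 - δ) * ∑ i, x i ^ 2 ≤ ∑ i, (Φ.mulVec x) i ^ 2 ∧
      ∑ i, (Φ.mulVec x) i ^ 2 ≤ (1 + δ) * ∑ i, x i ^ 2} with hS
  have hne : S.Nonempty := ⟨_, ric_nonempty_aux Φ L⟩
  have hRIC : RIC Φ L = sInf S := rfl
  have h0 : 0 ≤ sInf S := Real.sInf_nonneg fun δ hδ => hδ.1
  rw [hRIC]
  refine ⟨h0, fun x hx => ?_⟩
  have hX : (0:ℝ) ≤ ∑ i, x i ^ 2 := Finset.sum_nonneg fun i _ => sq_nonneg _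
  have key : ∀ ε : ℝ, 0 < ε →
      (1 - sInf S) * ∑ i, x i ^ 2 ≤ (∑ i, (Φ.mulVec x) i ^ 2) + ε ∧
      ∑ i, (Φ.mulVec x) i ^ 2 ≤ (1 + sInf S) * (∑ i, x i ^ 2) + ε := by
    intro ε hε
    have hε' : 0 < ε / ((∑ i, x i ^ 2) + 1) := by positivity
    obtain ⟨δ', hδ'S, hδ'lt⟩ := Real.lt_sInf_add_pos hne hε'
    obtain ⟨h1, h2⟩ := hδ'S.2 x hx
    have hfrac : (δ' - sInf S) * (∑ i, x i ^ 2) ≤ ε := by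
      rcases le_or_gt δ' (sInf S) with h | h
      · have : (δ' - sInf S) * (∑ i, x i ^ 2) ≤ 0 :=
          mul_nonpos_of_nonpos_of_nonneg (by linarith) hX
        linarith
      · have hle : δ' - sInf S ≤ ε / ((∑ i, x i ^ 2) + 1) := by linarith
        calc (δ' - sInf S) * (∑ i, x i ^ 2) ≤ (ε / ((∑ i, x i ^ 2) + 1)) * (∑ i, x i ^ 2) :=
              mul_le_mul_of_nonneg_right hle hX
          _ ≤ ε := by
              rw [div_mul_eq_mul_div, div_le_iff₀ (by positivity)]
              nlinarith
    constructor
    · nlinarith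
    · nlinarith
  constructor
  · have := fun ε hε => (key ε hε).1
    by_contra hcon
    push_neg at hcon
    have := this (((1 - sInf S) * ∑ i, x i ^ 2 - ∑ i, (Φ.mulVec x) i ^ 2) / 2) (by linarith)
    linarith
  · have := fun ε hε => (key ε hε).2
    by_contra hcon
    push_neg at hcon
    have := this ((∑ i, (Φ.mulVec x) i ^ 2 - (1 + sInf S) * ∑ i, x i ^ 2) / 2) (by linarith)
    linarith

lemma quad_zero (c n : ℝ) (hn : 0 ≤ n) (h : ∀ t : ℝ, 0 ≤ t ^ 2 * n - 2 * t * c) : c = 0 := by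
  have hn1 : (0:ℝ) < n + 1 := by linarith
  set t := c / (n + 1) with ht
  have hc : c = t * (n + 1) := by rw [ht, div_mul_cancel₀ _ (ne_of_gt hn1)]
  have h2 := h t
  rw [hc] at h2
  have ht2 : t ^ 2 * (n + 2) ≤ 0 := by nlinarith
  have : t = 0 := by nlinarith [sq_nonneg t]
  rw [hc, this, zero_mul]

set_option maxHeartbeats 2000000 in
theorem stmt_6 {M N : ℕ} (Φ : Matrix (Fin M) (Fin N) ℝ)
    (x : Fin N → ℝ) (T : Finset (Fin N)) (hT : ∀ j, j ∈ T ↔ x j ≠ 0)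
    (K : ℕ) (hK : T.card = K)
    (y : Fin M → ℝ) (hy : y = Φ.mulVec x)
    (Tb : Finset (Fin N)) (n_c n_f : ℕ)
    (hnc : (Tb ∩ T).card = n_c) (hnf : (Tb \ T).card = n_f) (hncK : n_c < K)
    (xhat : {j // j ∈ Tb} → ℝ)
    (hxhat : ∀ z : {j // j ∈ Tb} → ℝ,
      _root_.enorm (y - (colSub Φ Tb).mulVec xhat) ≤ _root_.enorm (y - (colSub Φ Tb).mulVec z))
    (rb : Fin M → ℝ) (hrb : rb = y - (colSub Φ Tb).mulVec xhat)
    (B : ℕ) (hB : 0 < B) (hN : K + n_f + B ≤ N)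
    (ΔT : Finset (Fin N)) (hcard : ΔT.card = B)
    (hmax : ∀ J : Finset (Fin N), J.card = B →
      ∑ j ∈ J, (∑ i, Φ i j * rb i) ^ 2 ≤ ∑ j ∈ ΔT, (∑ i, Φ i j * rb i) ^ 2)
    (hδ : RIC Φ (K + n_f + B)
      < min (Real.sqrt B / (Real.sqrt ((K : ℝ) - n_c) + Real.sqrt B)) (1 / 2)) :
    (ΔT ∩ (T \ Tb)).Nonempty := by
  by_contra hemp
  rw [Finset.not_nonempty_iff_eq_empty] at hemp
  obtain ⟨hδ0, hrip⟩ := ric_spec Φ (K + n_f + B)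
  set δ := RIC Φ (K + n_f + B) with hδdef
  have hδhalf : δ < 1/2 := lt_of_lt_of_le hδ (min_le_right _ _)
  set c : Fin N → ℝ := fun j => ∑ i, Φ i j * rb i with hc
  have hmax' : ∀ J : Finset (Fin N), J.card = B →
      ∑ j ∈ J, c j ^ 2 ≤ ∑ j ∈ ΔT, c j ^ 2 := by
    intro J hJ; simpa only [hc] using hmax J hJ
  set xe : Fin N → ℝ := fun j => if h : j ∈ Tb then xhat ⟨j, h⟩ else 0 with hxe
  set u : Fin N → ℝ := fun j => x j - xe j with hu
  -- colSub mulVec as full mulVec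
  have hcol : ∀ z : {j // j ∈ Tb} → ℝ, ∀ i,
      (colSub Φ Tb).mulVec z i = ∑ j, Φ i j * (if h : j ∈ Tb then z ⟨j, h⟩ else 0) := by
    intro z i
    simp only [Matrix.mulVec, dotProduct, colSub, Matrix.of_apply]
    rw [← Finset.sum_subset (Finset.subset_univ Tb)
      (fun j _ hj => by simp [hj])]
    rw [← Finset.sum_attach Tb (fun j => Φ i j * (if h : j ∈ Tb then z ⟨j, h⟩ else 0))]
    apply Finset.sum_congr rfl
    intro k _
    simp [k.2]
  -- rb = Φ u
  have hrbu : ∀ i, rb i = Φ.mulVec u i := by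
    intro i
    rw [hrb]
    simp only [Pi.sub_apply, hy, hcol xhat]
    simp only [Matrix.mulVec, dotProduct, hu, hxe]
    rw [← Finset.sum_sub_distrib]
    apply Finset.sum_congr rfl
    intro j _
    ring
  -- orthogonality
  have horth : ∀ j ∈ Tb, c j = 0 := by
    intro j hj
    have hn0 : (0:ℝ) ≤ ∑ i, Φ i j ^ 2 := Finset.sum_nonneg fun i _ => sq_nonneg _
    apply quad_zero (c j) (∑ i, Φ i j ^ 2) hn0
    intro t
    set d : {k // k ∈ Tb} → ℝ := fun k => if (k : Fin N) = j then t else 0 with hd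
    have hmv : ∀ i, (colSub Φ Tb).mulVec d i = Φ i j * t := by
      intro i
      simp only [Matrix.mulVec, dotProduct, colSub, Matrix.of_apply, hd]
      rw [Finset.sum_eq_single (⟨j, hj⟩ : {k // k ∈ Tb})]
      · simp
      · intro k _ hk
        have : (k : Fin N) ≠ j := fun h => hk (Subtype.ext h)
        simp [this]
      · intro h; exact absurd (Finset.mem_univ _) h
    have h1 := hxhat (xhat + d)
    rw [← hrb] at h1
    have hsum : ∀ i, (y - (colSub Φ Tb).mulVec (xhat + d)) i = rb i - Φ i j * t := by
      intro i
      have : (colSub Φ Tb).mulVec (xhat + d) i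
          = (colSub Φ Tb).mulVec xhat i + (colSub Φ Tb).mulVec d i := by
        rw [Matrix.mulVec_add]; rfl
      simp only [Pi.sub_apply, this, hmv i, hrb]
      ring
    have hP0 : (0:ℝ) ≤ ∑ i, rb i ^ 2 := Finset.sum_nonneg fun i _ => sq_nonneg _
    have hQ0 : (0:ℝ) ≤ ∑ i, (rb i - Φ i j * t) ^ 2 := Finset.sum_nonneg fun i _ => sq_nonneg _
    have h2 : ∑ i, rb i ^ 2 ≤ ∑ i, (rb i - Φ i j * t) ^ 2 := by
      have h1' : Real.sqrt (∑ i, rb i ^ 2)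
          ≤ Real.sqrt (∑ i, (rb i - Φ i j * t) ^ 2) := by
        have hss : ∑ i, (y - (colSub Φ Tb).mulVec (xhat + d)) i ^ 2
            = ∑ i, (rb i - Φ i j * t) ^ 2 :=
          Finset.sum_congr rfl (fun i _ => by rw [hsum i])
        have := h1
        unfold _root_.enorm at this
        rw [hss] at this
        exact this
      calc ∑ i, rb i ^ 2 = Real.sqrt (∑ i, rb i ^ 2) ^ 2 := (Real.sq_sqrt hP0).symm
        _ ≤ Real.sqrt (∑ i, (rb i - Φ i j * t) ^ 2) ^ 2 := by
            apply pow_le_pow_left₀ (Real.sqrt_nonneg _) h1'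
        _ = ∑ i, (rb i - Φ i j * t) ^ 2 := Real.sq_sqrt hQ0
    have hexp : ∑ i, (rb i - Φ i j * t) ^ 2
        = (∑ i, rb i ^ 2) - 2 * t * c j + t ^ 2 * ∑ i, Φ i j ^ 2 := by
      have hpt : ∀ i, (rb i - Φ i j * t) ^ 2
          = rb i ^ 2 - 2 * t * (Φ i j * rb i) + t ^ 2 * Φ i j ^ 2 := fun i => by ring
      rw [Finset.sum_congr rfl (fun i _ => hpt i), Finset.sum_add_distrib,
        Finset.sum_sub_distrib, ← Finset.mul_sum, ← Finset.mul_sum, hc]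
    rw [hexp] at h2
    linarith
  -- supports and cardinals
  set W : Finset (Fin N) := T \ Tb with hW
  have hWTb : Disjoint W Tb := Finset.sdiff_disjoint
  have hWcard : n_c + W.card = K := by
    have h1 := Finset.card_inter_add_card_sdiff T Tb
    rw [hK] at h1
    rw [← h1, Finset.inter_comm T Tb, hnc]
  have hWpos : 0 < W.card := by omega
  have hTTb : (T ∪ Tb).card = K + n_f := by
    have := Finset.card_sdiff_add_card Tb T
    rw [hnf, hK, Finset.union_comm] at this
    omega
  have huout : ∀ j, j ∉ T ∪ Tb → u j = 0 := by
    intro j hj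
    rw [Finset.mem_union] at hj
    push_neg at hj
    have hx0 : x j = 0 := by
      by_contra h; exact hj.1 ((hT j).mpr h)
    simp only [hu, hxe, hx0, dif_neg hj.2, sub_zero]
  have hsparse_u : SparseLe (K + n_f + B) u :=
    sparse_of_subset (s := T ∪ Tb) (fun j hj => huout j hj) (by omega)
  have huW : ∀ j ∈ W, u j = x j := by
    intro j hj
    rw [hW, Finset.mem_sdiff] at hj
    simp only [hu, hxe, dif_neg hj.2, sub_zero]
  -- abbreviations
  set P := ∑ i, rb i ^ 2 with hPdef
  set U := ∑ j, u j ^ 2 with hUdef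
  set a := ∑ j ∈ W, c j ^ 2 with hadef
  set XW := ∑ j ∈ W, x j ^ 2 with hXWdef
  have hP0 : 0 ≤ P := Finset.sum_nonneg fun i _ => sq_nonneg _
  have ha0 : 0 ≤ a := Finset.sum_nonneg fun j _ => sq_nonneg _
  have hXWU : XW ≤ U := by
    rw [hXWdef, hUdef]
    calc ∑ j ∈ W, x j ^ 2 = ∑ j ∈ W, u j ^ 2 :=
          Finset.sum_congr rfl (fun j hj => by rw [huW j hj])
      _ ≤ ∑ j, u j ^ 2 :=
          Finset.sum_le_sum_of_subset_of_nonneg (Finset.subset_univ W)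
            (fun j _ _ => sq_nonneg _)
  have hXWpos : 0 < XW := by
    obtain ⟨j0, hj0⟩ := Finset.card_pos.mp hWpos
    have hj0T : j0 ∈ T := (Finset.mem_sdiff.mp hj0).1
    have hx0 : x j0 ≠ 0 := (hT j0).mp hj0T
    refine Finset.sum_pos' (fun j _ => sq_nonneg _) ⟨j0, hj0, ?_⟩
    exact lt_of_le_of_ne (sq_nonneg _) (Ne.symm (pow_ne_zero 2 hx0))
  have hUpos : 0 < U := lt_of_lt_of_le hXWpos hXWU
  -- swap lemma
  have hswap : ∀ v : Fin N → ℝ, ∑ i, (Φ.mulVec v) i * rb i = ∑ j, v j * c j := by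
    intro v
    simp only [Matrix.mulVec, dotProduct, hc, Finset.sum_mul, Finset.mul_sum]
    rw [Finset.sum_comm]
    exact Finset.sum_congr rfl fun j _ => Finset.sum_congr rfl fun i _ => by ring
  -- key identity P = ∑_W c x
  have hkey : P = ∑ j ∈ W, c j * x j := by
    have h1 : P = ∑ i, (Φ.mulVec u) i * rb i := by
      rw [hPdef]
      exact Finset.sum_congr rfl fun i _ => by rw [← hrbu i]; ring
    rw [h1, hswap u]
    rw [← Finset.sum_subset (Finset.subset_univ (T ∪ Tb))
      (fun j _ hj => by rw [huout j hj, zero_mul])]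
    rw [← Finset.sdiff_union_self_eq_union (s := T) (t := Tb),
      Finset.sum_union Finset.sdiff_disjoint]
    have h2 : ∑ j ∈ Tb, u j * c j = 0 :=
      Finset.sum_eq_zero fun j hj => by rw [horth j hj, mul_zero]
    have h3 : ∑ j ∈ T \ Tb, u j * c j = ∑ j ∈ W, c j * x j :=
      Finset.sum_congr rfl fun j hj => by rw [huW j hj]; ring
    rw [h2, h3, add_zero]
  -- RIP lower bound on P
  have hripU : (1 - δ) * U ≤ P := by
    have := (hrip u hsparse_u).1
    rw [hUdef, hPdef]
    calc (1 - δ) * ∑ j, u j ^ 2 ≤ ∑ i, (Φ.mulVec u) i ^ 2 := this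
      _ = ∑ i, rb i ^ 2 := Finset.sum_congr rfl fun i _ => by rw [← hrbu i]
  -- Cauchy-Schwarz
  have hCS : P ^ 2 ≤ a * XW := by
    rw [hkey, hadef, hXWdef]
    exact Finset.sum_mul_sq_le_sq_mul_sq W c x
  have h1δ : 0 < 1 - δ := by linarith
  have ha_lb : (1 - δ) ^ 2 * U ≤ a := by
    have h1 : (1 - δ) * U ≤ P := hripU
    have h2 : ((1 - δ) * U) ^ 2 ≤ P ^ 2 :=
      pow_le_pow_left₀ (by positivity) h1 2
    have h3 : (1 - δ) ^ 2 * U * XW ≤ a * XW := by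
      calc (1 - δ) ^ 2 * U * XW ≤ (1 - δ) ^ 2 * U * U := by nlinarith
        _ = ((1 - δ) * U) ^ 2 := by ring
        _ ≤ P ^ 2 := h2
        _ ≤ a * XW := hCS
    exact le_of_mul_le_mul_right h3 hXWpos
  -- cross bound
  set S : Finset (Fin N) := ΔT \ Tb with hS
  set A := ∑ j ∈ S, c j ^ 2 with hAdef
  have hA0 : 0 ≤ A := Finset.sum_nonneg fun j _ => sq_nonneg _
  have hDA : ∑ j ∈ ΔT, c j ^ 2 = A := by
    rw [hAdef]
    refine (Finset.sum_subset (Finset.sdiff_subset) ?_).symm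
    intro j hj hjS
    have hjTb : j ∈ Tb := by
      by_contra h
      exact hjS (Finset.mem_sdiff.mpr ⟨hj, h⟩)
    rw [horth j hjTb]; norm_num
  have hSout : ∀ j ∈ S, j ∉ T ∪ Tb := by
    intro j hj
    rw [hS, Finset.mem_sdiff] at hj
    rw [Finset.mem_union]
    rintro (hT' | hTb')
    · have : j ∈ ΔT ∩ (T \ Tb) :=
        Finset.mem_inter.mpr ⟨hj.1, Finset.mem_sdiff.mpr ⟨hT', hj.2⟩⟩
      rw [hemp] at this
      exact absurd this (Finset.notMem_empty j)
    · exact hj.2 hTb'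
  have hScard : S.card ≤ B := by
    rw [hS]; exact le_trans (Finset.card_le_card Finset.sdiff_subset) (le_of_eq hcard)
  have hcross : A ≤ δ ^ 2 * U := by
    rcases eq_or_lt_of_le hA0 with hA | hApos
    · rw [← hA]; positivity
    · set t := Real.sqrt (U / A) with htdef
      have ht0 : 0 ≤ t := Real.sqrt_nonneg _
      have ht2 : t ^ 2 = U / A := Real.sq_sqrt (by positivity)
      set v : Fin N → ℝ := fun j => if j ∈ S then t * c j else 0 with hv
      have hvout : ∀ j, j ∉ S → v j = 0 := fun j hj => by simp [hv, hj]
      have hvu0 : ∀ j, v j * u j = 0 := by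
        intro j
        by_cases hjS : j ∈ S
        · rw [huout j (hSout j hjS), mul_zero]
        · rw [hvout j hjS, zero_mul]
      have hvsq : ∑ j, v j ^ 2 = U := by
        rw [← Finset.sum_subset (Finset.subset_univ S)
          (fun j _ hj => by rw [hvout j hj]; norm_num)]
        have : ∑ j ∈ S, v j ^ 2 = t ^ 2 * A := by
          rw [hAdef, Finset.mul_sum]
          exact Finset.sum_congr rfl fun j hj => by rw [hv]; simp [hj]; ring
        rw [this, ht2, div_mul_cancel₀ _ (ne_of_gt hApos)]
      have hΦv : ∑ i, (Φ.mulVec v) i * rb i = t * A := by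
        rw [hswap v]
        rw [← Finset.sum_subset (Finset.subset_univ S)
          (fun j _ hj => by rw [hvout j hj, zero_mul])]
        rw [hAdef, Finset.mul_sum]
        exact Finset.sum_congr rfl fun j hj => by rw [hv]; simp [hj]; ring
      -- sparsity of v ± u
      have hsupp : ∀ (w : Fin N → ℝ), (∀ j, w j = v j + u j ∨ w j = v j - u j) →
          SparseLe (K + n_f + B) w := by
        intro w hw
        apply sparse_of_subset (s := S ∪ (T ∪ Tb))
        · intro j hj
          rw [Finset.mem_union] at hj
          push_neg at hj
          have h1 : v j = 0 := hvout j hj.1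
          have h2 : u j = 0 := huout j hj.2
          rcases hw j with h | h <;> rw [h, h1, h2] <;> ring
        · calc (S ∪ (T ∪ Tb)).card ≤ S.card + (T ∪ Tb).card := Finset.card_union_le _ _
            _ ≤ B + (K + n_f) := by rw [hTTb]; omega
            _ = K + n_f + B := by ring
      have hsp : SparseLe (K + n_f + B) (v + u) :=
        hsupp _ (fun j => Or.inl rfl)
      have hsm : SparseLe (K + n_f + B) (v - u) :=
        hsupp _ (fun j => Or.inr rfl)
      have hnvp : ∑ j, (v + u) j ^ 2 = U + U := by
        have : ∀ j, (v + u) j ^ 2 = v j ^ 2 + u j ^ 2 + 2 * (v j * u j) := by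
          intro j; simp only [Pi.add_apply]; ring
        rw [Finset.sum_congr rfl fun j _ => this j]
        simp only [hvu0, mul_zero, add_zero, Finset.sum_add_distrib]
        rw [hvsq, hUdef]
      have hnvm : ∑ j, (v - u) j ^ 2 = U + U := by
        have : ∀ j, (v - u) j ^ 2 = v j ^ 2 + u j ^ 2 - 2 * (v j * u j) := by
          intro j; simp only [Pi.sub_apply]; ring
        rw [Finset.sum_congr rfl fun j _ => this j]
        simp only [hvu0, mul_zero, sub_zero, Finset.sum_add_distrib]
        rw [hvsq, hUdef]
      have hmp : ∀ i, (Φ.mulVec (v + u)) i = (Φ.mulVec v) i + rb i := by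
        intro i; rw [Matrix.mulVec_add]; simp [hrbu i]
      have hmm : ∀ i, (Φ.mulVec (v - u)) i = (Φ.mulVec v) i - rb i := by
        intro i; rw [Matrix.mulVec_sub]; simp [hrbu i]
      have hep : ∑ i, (Φ.mulVec (v + u)) i ^ 2
          = (∑ i, (Φ.mulVec v) i ^ 2) + 2 * (t * A) + P := by
        rw [Finset.sum_congr rfl fun i _ => by rw [hmp i]]
        have : ∀ i : Fin M, ((Φ.mulVec v) i + rb i) ^ 2
            = (Φ.mulVec v) i ^ 2 + 2 * ((Φ.mulVec v) i * rb i) + rb i ^ 2 := fun i => by ring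
        rw [Finset.sum_congr rfl fun i _ => this i, Finset.sum_add_distrib,
          Finset.sum_add_distrib, ← Finset.mul_sum, hΦv, hPdef]
      have hem : ∑ i, (Φ.mulVec (v - u)) i ^ 2
          = (∑ i, (Φ.mulVec v) i ^ 2) - 2 * (t * A) + P := by
        rw [Finset.sum_congr rfl fun i _ => by rw [hmm i]]
        have : ∀ i : Fin M, ((Φ.mulVec v) i - rb i) ^ 2
            = (Φ.mulVec v) i ^ 2 - 2 * ((Φ.mulVec v) i * rb i) + rb i ^ 2 := fun i => by ring
        rw [Finset.sum_congr rfl fun i _ => this i, Finset.sum_add_distrib,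
          Finset.sum_sub_distrib, ← Finset.mul_sum, hΦv, hPdef]
      have hup := (hrip (v + u) hsp).2
      have hlo := (hrip (v - u) hsm).1
      rw [hep, hnvp] at hup
      rw [hem, hnvm] at hlo
      have htA : t * A ≤ δ * U := by linarith
      have htA0 : 0 ≤ t * A := mul_nonneg ht0 hA0
      have hsq : (t * A) ^ 2 ≤ (δ * U) ^ 2 := pow_le_pow_left₀ htA0 htA 2
      have ht2A : t ^ 2 * A ^ 2 = U * A := by
        rw [ht2]; field_simp
      have h5 : U * A ≤ δ ^ 2 * U ^ 2 := by
        calc U * A = t ^ 2 * A ^ 2 := ht2A.symm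
          _ = (t * A) ^ 2 := by ring
          _ ≤ (δ * U) ^ 2 := hsq
          _ = δ ^ 2 * U ^ 2 := by ring
      have h6 : U * A ≤ U * (δ ^ 2 * U) := by
        calc U * A ≤ δ ^ 2 * U ^ 2 := h5
          _ = U * (δ ^ 2 * U) := by ring
      exact le_of_mul_le_mul_left h6 hUpos
  -- final case analysis
  set p := Real.sqrt (W.card : ℝ) with hpdef
  set q := Real.sqrt (B : ℝ) with hqdef
  have hp0 : 0 ≤ p := Real.sqrt_nonneg _
  have hq0 : 0 < q := Real.sqrt_pos.mpr (by exact_mod_cast hB)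
  have hp2 : p ^ 2 = (W.card : ℝ) := Real.sq_sqrt (Nat.cast_nonneg _)
  have hq2 : q ^ 2 = (B : ℝ) := Real.sq_sqrt (Nat.cast_nonneg _)
  have hcast : ((K : ℝ) - n_c) = (W.card : ℝ) := by
    have : (n_c : ℝ) + (W.card : ℝ) = (K : ℝ) := by exact_mod_cast hWcard
    linarith
  have hδB : δ < q / (p + q) := by
    have := lt_of_lt_of_le hδ (min_le_left _ _)
    rwa [hcast] at this
  have hδpq : δ * (p + q) < q := by
    rw [div_eq_mul_inv] at hδB
    have hpq : 0 < p + q := by linarith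
    calc δ * (p + q) < (q * (p + q)⁻¹) * (p + q) := by
          apply mul_lt_mul_of_pos_right hδB hpq
      _ = q := inv_mul_cancel_right₀ (ne_of_gt hpq) q
  by_cases hBs : W.card ≤ B
  · -- B large: J ⊇ W
    obtain ⟨J, hWJ, -, hJcard⟩ :=
      Finset.exists_subsuperset_card_eq (Finset.subset_univ W) hBs
        (by rw [Finset.card_univ, Fintype.card_fin]; omega)
    have haJ : a ≤ ∑ j ∈ J, c j ^ 2 := by
      rw [hadef]
      exact Finset.sum_le_sum_of_subset_of_nonneg hWJ (fun j _ _ => sq_nonneg _)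
    have haA : a ≤ δ ^ 2 * U :=
      le_trans haJ (le_trans (hmax' J hJcard) (le_of_eq_of_le hDA hcross))
    have h7 : (1 - δ) ^ 2 * U ≤ δ ^ 2 * U := le_trans ha_lb haA
    have h8 : (1 - δ) ^ 2 ≤ δ ^ 2 := le_of_mul_le_mul_right h7 hUpos
    have hexp8 : (1 - δ) ^ 2 - δ ^ 2 = 1 - 2 * δ := by ring
    linarith
  · -- B small: take the best B-subset of W
    push_neg at hBs
    have hpow : (Finset.powersetCard B W).Nonempty :=
      Finset.powersetCard_nonempty.mpr (le_of_lt hBs)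
    obtain ⟨J, hJmem, hJmax⟩ :=
      Finset.exists_max_image _ (fun J => ∑ j ∈ J, c j ^ 2) hpow
    obtain ⟨hJW, hJcard⟩ := Finset.mem_powersetCard.mp hJmem
    have hJne : J.Nonempty := Finset.card_pos.mp (by omega)
    have hswapc : ∀ k ∈ W \ J, ∀ j ∈ J, c k ^ 2 ≤ c j ^ 2 := by
      intro k hk j hj
      have hkW : k ∈ W := (Finset.mem_sdiff.mp hk).1
      have hkJ : k ∉ J := (Finset.mem_sdiff.mp hk).2
      have hkeJ : k ∉ J.erase j := fun h => hkJ (Finset.mem_of_mem_erase h)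
      have hJ'card : (insert k (J.erase j)).card = B := by
        rw [Finset.card_insert_of_notMem hkeJ, Finset.card_erase_of_mem hj, hJcard]
        omega
      have hJ'W : insert k (J.erase j) ⊆ W := by
        intro m hm
        rw [Finset.mem_insert] at hm
        rcases hm with rfl | hm
        · exact hkW
        · exact hJW (Finset.mem_of_mem_erase hm)
      have hle := hJmax (insert k (J.erase j))
        (Finset.mem_powersetCard.mpr ⟨hJ'W, hJ'card⟩)
      rw [Finset.sum_insert hkeJ] at hle
      have herase : ∑ m ∈ J.erase j, c m ^ 2 + c j ^ 2 = ∑ m ∈ J, c m ^ 2 :=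
        Finset.sum_erase_add J _ hj
      linarith
    obtain ⟨jm, hjm, hjmin⟩ := Finset.exists_min_image J (fun j => c j ^ 2) hJne
    have hgJ0 : 0 ≤ ∑ j ∈ J, c j ^ 2 := Finset.sum_nonneg fun j _ => sq_nonneg _
    have hsB : (B : ℝ) ≤ (W.card : ℝ) := by exact_mod_cast le_of_lt hBs
    have h1 : ∑ k ∈ W \ J, c k ^ 2 ≤ ((W.card : ℝ) - B) * c jm ^ 2 := by
      calc ∑ k ∈ W \ J, c k ^ 2 ≤ ∑ _k ∈ W \ J, c jm ^ 2 :=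
            Finset.sum_le_sum (fun k hk => hswapc k hk jm hjm)
        _ = ((W \ J).card : ℝ) * c jm ^ 2 := by rw [Finset.sum_const, nsmul_eq_mul]
        _ = ((W.card : ℝ) - B) * c jm ^ 2 := by
            rw [Finset.card_sdiff_of_subset hJW, hJcard, Nat.cast_sub (le_of_lt hBs)]
    have h2 : (B : ℝ) * c jm ^ 2 ≤ ∑ j ∈ J, c j ^ 2 := by
      have := Finset.card_nsmul_le_sum J (fun j => c j ^ 2) (c jm ^ 2)
        (fun j hj => hjmin j hj)
      rwa [hJcard, nsmul_eq_mul] at this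
    have h3 : ∑ k ∈ W \ J, c k ^ 2 + ∑ j ∈ J, c j ^ 2 = a := Finset.sum_sdiff hJW
    have hgJA : ∑ j ∈ J, c j ^ 2 ≤ δ ^ 2 * U :=
      le_trans (hmax' J hJcard) (le_of_eq_of_le hDA hcross)
    have hBa : (B : ℝ) * a ≤ (W.card : ℝ) * ∑ j ∈ J, c j ^ 2 := by
      have m1 : (B : ℝ) * (∑ k ∈ W \ J, c k ^ 2) ≤ (B : ℝ) * (((W.card : ℝ) - B) * c jm ^ 2) :=
        mul_le_mul_of_nonneg_left h1 (Nat.cast_nonneg _)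
      have m2 : ((W.card : ℝ) - B) * ((B : ℝ) * c jm ^ 2) ≤ ((W.card : ℝ) - B) * ∑ j ∈ J, c j ^ 2 :=
        mul_le_mul_of_nonneg_left h2 (by linarith)
      have meq : (B : ℝ) * (((W.card : ℝ) - B) * c jm ^ 2)
          = ((W.card : ℝ) - B) * ((B : ℝ) * c jm ^ 2) := by ring
      have hdist : ((W.card : ℝ)) * ∑ j ∈ J, c j ^ 2
          = (((W.card : ℝ) - B)) * (∑ j ∈ J, c j ^ 2) + (B : ℝ) * ∑ j ∈ J, c j ^ 2 := by ring
      rw [← h3, mul_add]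
      linarith
    -- combine
    have hfin : (B : ℝ) * ((1 - δ) ^ 2 * U) ≤ (W.card : ℝ) * (δ ^ 2 * U) := by
      calc (B : ℝ) * ((1 - δ) ^ 2 * U) ≤ (B : ℝ) * a :=
            mul_le_mul_of_nonneg_left ha_lb (Nat.cast_nonneg _)
        _ ≤ (W.card : ℝ) * ∑ j ∈ J, c j ^ 2 := hBa
        _ ≤ (W.card : ℝ) * (δ ^ 2 * U) :=
            mul_le_mul_of_nonneg_left hgJA (Nat.cast_nonneg _)
    have hfin2 : (B : ℝ) * (1 - δ) ^ 2 ≤ (W.card : ℝ) * δ ^ 2 := by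
      have : ((B : ℝ) * (1 - δ) ^ 2) * U ≤ ((W.card : ℝ) * δ ^ 2) * U := by
        calc ((B : ℝ) * (1 - δ) ^ 2) * U = (B : ℝ) * ((1 - δ) ^ 2 * U) := by ring
          _ ≤ (W.card : ℝ) * (δ ^ 2 * U) := hfin
          _ = ((W.card : ℝ) * δ ^ 2) * U := by ring
      exact le_of_mul_le_mul_right this hUpos
    have hgt : p * δ < q * (1 - δ) := by
      have e1 : δ * (p + q) = p * δ + δ * q := by ring
      have e2 : q * (1 - δ) = q - δ * q := by ring
      linarith
    have h0le : 0 ≤ p * δ := mul_nonneg hp0 hδ0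
    have hms := mul_self_lt_mul_self h0le hgt
    have e3 : (p * δ) * (p * δ) = p ^ 2 * δ ^ 2 := by ring
    have e4 : (q * (1 - δ)) * (q * (1 - δ)) = q ^ 2 * (1 - δ) ^ 2 := by ring
    rw [e3, e4, hp2, hq2] at hms
    linarith
end

section
/- Let K and B be positive integers and n_f a nonnegative integer with 1 ≤ n_f + B ≤ ⌈K/2⌉, and let Φ ∈ ℝ^{M×N} with 3⌈K/2⌉ ≤ N. If the restricted isometry constant of Φ satisfies δ_{K+n_f+B} ≥ 3√B/(√K+√B), then δ_{K+B} > √B/(√K+√B). -/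
open scoped BigOperators
open Matrix

section aux

variable {M N : ℕ} (Φ : Matrix (Fin M) (Fin N) ℝ) (L : ℕ)

/-- The feasible set of the RIC. -/
def RICset : Set ℝ :=
  {δ : ℝ | 0 ≤ δ ∧ ∀ x : Fin N → ℝ, SparseLe L x →
    (1 - δ) * ∑ i, x i ^ 2 ≤ ∑ i, (Φ.mulVec x) i ^ 2 ∧
      ∑ i, (Φ.mulVec x) i ^ 2 ≤ (1 + δ) * ∑ i, x i ^ 2}

lemma RIC_eq : RIC Φ L = sInf (RICset Φ L) := rfl

lemma RICset_nonempty : (RICset Φ L).Nonempty := by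
  refine ⟨max 1 (∑ i, ∑ j, Φ i j ^ 2), le_trans zero_le_one (le_max_left _ _), ?_⟩
  intro x _
  constructor
  · have h1 : (1 : ℝ) - max 1 (∑ i, ∑ j, Φ i j ^ 2) ≤ 0 := by
      have := le_max_left (1:ℝ) (∑ i, ∑ j, Φ i j ^ 2); linarith
    have h2 : (0:ℝ) ≤ ∑ i, x i ^ 2 := Finset.sum_nonneg fun i _ => sq_nonneg _
    have h3 : (0:ℝ) ≤ ∑ i, (Φ.mulVec x) i ^ 2 :=
      Finset.sum_nonneg fun i _ => sq_nonneg _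
    nlinarith
  · have key : ∑ i, (Φ.mulVec x) i ^ 2 ≤ (∑ i, ∑ j, Φ i j ^ 2) * ∑ j, x j ^ 2 := by
      rw [Finset.sum_mul]
      refine Finset.sum_le_sum fun i _ => ?_
      have := Finset.sum_mul_sq_le_sq_mul_sq Finset.univ (fun j => Φ i j) x
      simpa [Matrix.mulVec, dotProduct] using this
    have h2 : (0:ℝ) ≤ ∑ i, x i ^ 2 := Finset.sum_nonneg fun i _ => sq_nonneg _
    have h4 : (∑ i, ∑ j, Φ i j ^ 2) ≤ 1 + max 1 (∑ i, ∑ j, Φ i j ^ 2) := by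
      have := le_max_right (1:ℝ) (∑ i, ∑ j, Φ i j ^ 2); linarith
    calc ∑ i, (Φ.mulVec x) i ^ 2 ≤ (∑ i, ∑ j, Φ i j ^ 2) * ∑ j, x j ^ 2 := key
      _ ≤ (1 + max 1 (∑ i, ∑ j, Φ i j ^ 2)) * ∑ j, x j ^ 2 :=
        mul_le_mul_of_nonneg_right h4 h2

lemma RICset_bddBelow : BddBelow (RICset Φ L) := ⟨0, fun _ h => h.1⟩

lemma RIC_nonneg : 0 ≤ RIC Φ L :=
  le_csInf (RICset_nonempty Φ L) fun _ h => h.1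

/-- The RIC itself is feasible. -/
lemma RIC_mem : RIC Φ L ∈ RICset Φ L := by
  refine ⟨RIC_nonneg Φ L, ?_⟩
  intro x hx
  by_cases hc : ∑ i, x i ^ 2 = 0
  · have hx0 : ∀ j, x j = 0 := by
      intro j
      have := (Finset.sum_eq_zero_iff_of_nonneg (fun i _ => sq_nonneg (x i))).mp hc j
        (Finset.mem_univ j)
      exact pow_eq_zero_iff (n := 2) (by norm_num) |>.mp this
    have hΦx : ∀ i, Φ.mulVec x i = 0 := by
      intro i
      simp [Matrix.mulVec, dotProduct, hx0]
    simp [hc, hΦx]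
  · have hc' : 0 < ∑ i, x i ^ 2 :=
      lt_of_le_of_ne (Finset.sum_nonneg fun i _ => sq_nonneg _) (Ne.symm hc)
    set c := ∑ i, x i ^ 2 with hcdef
    set d := ∑ i, (Φ.mulVec x) i ^ 2 with hddef
    have hlow : (c - d) / c ≤ RIC Φ L := by
      apply le_csInf (RICset_nonempty Φ L)
      intro δ hδ
      have := (hδ.2 x hx).1
      rw [div_le_iff₀ hc']
      nlinarith
    have hhigh : (d - c) / c ≤ RIC Φ L := by
      apply le_csInf (RICset_nonempty Φ L)
      intro δ hδ
      have := (hδ.2 x hx).2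
      rw [div_le_iff₀ hc']
      nlinarith
    rw [div_le_iff₀ hc'] at hlow hhigh
    constructor <;> nlinarith

lemma RIC_le {δ : ℝ} (h : δ ∈ RICset Φ L) : RIC Φ L ≤ δ :=
  csInf_le (RICset_bddBelow Φ L) h

end aux

/-- Partition a finset of cardinality `≤ 3t` into three pieces of cardinality `≤ t`. -/
lemma exists_three_partition {α : Type*} [DecidableEq α] (s : Finset α) (t : ℕ)
    (h : s.card ≤ 3 * t) :
    ∃ s₁ s₂ s₃ : Finset α, s₁ ∪ s₂ ∪ s₃ = s ∧ Disjoint s₁ s₂ ∧ Disjoint s₁ s₃ ∧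
      Disjoint s₂ s₃ ∧ s₁.card ≤ t ∧ s₂.card ≤ t ∧ s₃.card ≤ t := by
  obtain ⟨s₁, hs₁sub, hs₁card⟩ := Finset.exists_subset_card_eq (s := s) (n := min t s.card)
    (min_le_right _ _)
  set u := s \ s₁ with hu
  have hucard : u.card = s.card - min t s.card := by
    rw [hu, Finset.card_sdiff_of_subset hs₁sub, hs₁card]
  obtain ⟨s₂, hs₂sub, hs₂card⟩ := Finset.exists_subset_card_eq (s := u) (n := min t u.card)
    (min_le_right _ _)
  refine ⟨s₁, s₂, u \ s₂, ?_, ?_, ?_, ?_, ?_, ?_, ?_⟩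
  · rw [Finset.union_assoc, Finset.union_sdiff_of_subset hs₂sub, hu,
      Finset.union_sdiff_of_subset hs₁sub]
  · exact (Finset.disjoint_sdiff).mono_right hs₂sub
  · exact (Finset.disjoint_sdiff).mono_right (Finset.sdiff_subset)
  · exact Finset.disjoint_sdiff
  · rw [hs₁card]; exact min_le_left _ _
  · rw [hs₂card]; exact min_le_left _ _
  · rw [Finset.card_sdiff_of_subset hs₂sub, hs₂card, hucard]; omega

set_option maxHeartbeats 1600000 in
theorem stmt_8 {M N : ℕ} (Φ : Matrix (Fin M) (Fin N) ℝ) (K B n_f : ℕ)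
    (hK : 0 < K) (hB : 0 < B)
    (h1 : 1 ≤ n_f + B) (h2 : n_f + B ≤ (K + 1) / 2)
    (hN : 3 * ((K + 1) / 2) ≤ N)
    (hδ : 3 * Real.sqrt B / (Real.sqrt K + Real.sqrt B) ≤ RIC Φ (K + n_f + B)) :
    RIC Φ (K + B) > Real.sqrt B / (Real.sqrt K + Real.sqrt B) := by
  set r : ℝ := Real.sqrt B / (Real.sqrt K + Real.sqrt B) with hr
  have hrpos : 0 < r := by
    apply div_pos (Real.sqrt_pos.mpr (by exact_mod_cast hB))
    have := Real.sqrt_pos.mpr (show (0:ℝ) < K by exact_mod_cast hK)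
    have := Real.sqrt_nonneg (B:ℝ)
    linarith
  by_contra hcon
  push_neg at hcon
  set δ := RIC Φ (K + B) with hδdef
  have hδr : δ ≤ r := hcon
  have hδ0 : 0 ≤ δ := RIC_nonneg Φ (K + B)
  obtain ⟨-, hfeas⟩ := RIC_mem Φ (K + B)
  set t := (K + 1) / 2 with ht
  -- key: 2δ is feasible for order K + n_f + B
  have hmem : (2 * δ) ∈ RICset Φ (K + n_f + B) := by
    refine ⟨by linarith, ?_⟩
    intro x hx
    -- partition the support
    set s := (Finset.univ.filter fun i => x i ≠ 0) with hs
    have hscard : s.card ≤ 3 * t := by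
      have : s.card ≤ K + n_f + B := hx
      omega
    obtain ⟨s₁, s₂, s₃, huni, hd12, hd13, hd23, hc1, hc2, hc3⟩ :=
      exists_three_partition s t hscard
    set x₁ : Fin N → ℝ := fun k => if k ∈ s₁ then x k else 0 with hx₁
    set x₂ : Fin N → ℝ := fun k => if k ∈ s₂ then x k else 0 with hx₂
    set x₃ : Fin N → ℝ := fun k => if k ∈ s₃ then x k else 0 with hx₃
    have hzero : ∀ k, k ∉ s → x k = 0 := by
      intro k hk
      by_contra hne
      exact hk (Finset.mem_filter.mpr ⟨Finset.mem_univ _, hne⟩)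
    have hsum : x = x₁ + x₂ + x₃ := by
      funext k
      simp only [Pi.add_apply, hx₁, hx₂, hx₃]
      by_cases hk : k ∈ s
      · rw [← huni] at hk
        simp only [Finset.mem_union] at hk
        by_cases h1' : k ∈ s₁ <;> by_cases h2' : k ∈ s₂ <;> by_cases h3' : k ∈ s₃ <;>
          simp_all <;>
          first
          | exact absurd (Finset.disjoint_left.mp hd12 h1' h2') (fun h => h)
          | exact absurd (Finset.disjoint_left.mp hd13 h1' h3') (fun h => h)
          | exact absurd (Finset.disjoint_left.mp hd23 h2' h3') (fun h => h)
      · have h1' : k ∉ s₁ := fun h => hk (huni ▸ Finset.mem_union_left _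
          (Finset.mem_union_left _ h))
        have h2' : k ∉ s₂ := fun h => hk (huni ▸ Finset.mem_union_left _
          (Finset.mem_union_right _ h))
        have h3' : k ∉ s₃ := fun h => hk (huni ▸ Finset.mem_union_right _ h)
        simp [h1', h2', h3', hzero k hk]
    -- pairwise products vanish
    have hprod12 : ∀ k, x₁ k * x₂ k = 0 := by
      intro k
      by_cases h1' : k ∈ s₁
      · have : k ∉ s₂ := Finset.disjoint_left.mp hd12 h1'
        simp [hx₁, hx₂, this]
      · simp [hx₁, h1']
    have hprod13 : ∀ k, x₁ k * x₃ k = 0 := by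
      intro k
      by_cases h1' : k ∈ s₁
      · have : k ∉ s₃ := Finset.disjoint_left.mp hd13 h1'
        simp [hx₁, hx₃, this]
      · simp [hx₁, h1']
    have hprod23 : ∀ k, x₂ k * x₃ k = 0 := by
      intro k
      by_cases h2' : k ∈ s₂
      · have : k ∉ s₃ := Finset.disjoint_left.mp hd23 h2'
        simp [hx₂, hx₃, this]
      · simp [hx₂, h2']
    -- sparsity of pairs
    have h2t : 2 * t ≤ K + B := by omega
    have hsparse : ∀ (a b : Finset (Fin N)), a.card ≤ t → b.card ≤ t →
        ∀ y : Fin N → ℝ, (∀ k, k ∉ a → k ∉ b → y k = 0) → SparseLe (K + B) y := by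
      intro a b hca hcb y hy
      have hsub : (Finset.univ.filter fun i => y i ≠ 0) ⊆ a ∪ b := by
        intro k hk
        rw [Finset.mem_filter] at hk
        by_contra hmem
        rw [Finset.mem_union] at hmem
        push_neg at hmem
        exact hk.2 (hy k hmem.1 hmem.2)
      calc (Finset.univ.filter fun i => y i ≠ 0).card ≤ (a ∪ b).card :=
            Finset.card_le_card hsub
        _ ≤ a.card + b.card := Finset.card_union_le _ _
        _ ≤ K + B := by omega
    have hzero₁ : ∀ k, k ∉ s₁ → x₁ k = 0 := fun k hk => by simp [hx₁, hk]
    have hzero₂ : ∀ k, k ∉ s₂ → x₂ k = 0 := fun k hk => by simp [hx₂, hk]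
    have hzero₃ : ∀ k, k ∉ s₃ → x₃ k = 0 := fun k hk => by simp [hx₃, hk]
    have hsp12p : SparseLe (K + B) (x₁ + x₂) :=
      hsparse s₁ s₂ hc1 hc2 _ (fun k h1' h2' => by
        simp [Pi.add_apply, hzero₁ k h1', hzero₂ k h2'])
    have hsp12m : SparseLe (K + B) (x₁ - x₂) :=
      hsparse s₁ s₂ hc1 hc2 _ (fun k h1' h2' => by
        simp [Pi.sub_apply, hzero₁ k h1', hzero₂ k h2'])
    have hsp13p : SparseLe (K + B) (x₁ + x₃) :=
      hsparse s₁ s₃ hc1 hc3 _ (fun k h1' h3' => by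
        simp [Pi.add_apply, hzero₁ k h1', hzero₃ k h3'])
    have hsp13m : SparseLe (K + B) (x₁ - x₃) :=
      hsparse s₁ s₃ hc1 hc3 _ (fun k h1' h3' => by
        simp [Pi.sub_apply, hzero₁ k h1', hzero₃ k h3'])
    have hsp23p : SparseLe (K + B) (x₂ + x₃) :=
      hsparse s₂ s₃ hc2 hc3 _ (fun k h2' h3' => by
        simp [Pi.add_apply, hzero₂ k h2', hzero₃ k h3'])
    have hsp23m : SparseLe (K + B) (x₂ - x₃) :=
      hsparse s₂ s₃ hc2 hc3 _ (fun k h2' h3' => by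
        simp [Pi.sub_apply, hzero₂ k h2', hzero₃ k h3'])
    -- norms
    set S₁ := ∑ i, x₁ i ^ 2 with hS₁
    set S₂ := ∑ i, x₂ i ^ 2 with hS₂
    set S₃ := ∑ i, x₃ i ^ 2 with hS₃
    have hnx : ∑ i, x i ^ 2 = S₁ + S₂ + S₃ := by
      rw [hS₁, hS₂, hS₃, ← Finset.sum_add_distrib, ← Finset.sum_add_distrib]
      apply Finset.sum_congr rfl
      intro k _
      have h12 := hprod12 k
      have h13 := hprod13 k
      have h23 := hprod23 k
      have : x k = x₁ k + x₂ k + x₃ k := by rw [hsum]; rfl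
      rw [this]; linear_combination (2:ℝ) * h12 + (2:ℝ) * h13 + (2:ℝ) * h23
    have hn12p : ∑ i, (x₁ + x₂) i ^ 2 = S₁ + S₂ := by
      rw [hS₁, hS₂, ← Finset.sum_add_distrib]
      apply Finset.sum_congr rfl
      intro k _
      have := hprod12 k
      simp only [Pi.add_apply]; linear_combination (2:ℝ) * this
    have hn12m : ∑ i, (x₁ - x₂) i ^ 2 = S₁ + S₂ := by
      rw [hS₁, hS₂, ← Finset.sum_add_distrib]
      apply Finset.sum_congr rfl
      intro k _
      have := hprod12 k
      simp only [Pi.sub_apply]; linear_combination (-2:ℝ) * this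
    have hn13p : ∑ i, (x₁ + x₃) i ^ 2 = S₁ + S₃ := by
      rw [hS₁, hS₃, ← Finset.sum_add_distrib]
      apply Finset.sum_congr rfl
      intro k _
      have := hprod13 k
      simp only [Pi.add_apply]; linear_combination (2:ℝ) * this
    have hn13m : ∑ i, (x₁ - x₃) i ^ 2 = S₁ + S₃ := by
      rw [hS₁, hS₃, ← Finset.sum_add_distrib]
      apply Finset.sum_congr rfl
      intro k _
      have := hprod13 k
      simp only [Pi.sub_apply]; linear_combination (-2:ℝ) * this
    have hn23p : ∑ i, (x₂ + x₃) i ^ 2 = S₂ + S₃ := by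
      rw [hS₂, hS₃, ← Finset.sum_add_distrib]
      apply Finset.sum_congr rfl
      intro k _
      have := hprod23 k
      simp only [Pi.add_apply]; linear_combination (2:ℝ) * this
    have hn23m : ∑ i, (x₂ - x₃) i ^ 2 = S₂ + S₃ := by
      rw [hS₂, hS₃, ← Finset.sum_add_distrib]
      apply Finset.sum_congr rfl
      intro k _
      have := hprod23 k
      simp only [Pi.sub_apply]; linear_combination (-2:ℝ) * this
    -- pair bounds from feasibility
    obtain ⟨hb12p, hb12p'⟩ := hfeas _ hsp12p
    obtain ⟨hb12m, hb12m'⟩ := hfeas _ hsp12m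
    obtain ⟨hb13p, hb13p'⟩ := hfeas _ hsp13p
    obtain ⟨hb13m, hb13m'⟩ := hfeas _ hsp13m
    obtain ⟨hb23p, hb23p'⟩ := hfeas _ hsp23p
    obtain ⟨hb23m, hb23m'⟩ := hfeas _ hsp23m
    rw [hn12p] at hb12p hb12p'
    rw [hn12m] at hb12m hb12m'
    rw [hn13p] at hb13p hb13p'
    rw [hn13m] at hb13m hb13m'
    rw [hn23p] at hb23p hb23p'
    rw [hn23m] at hb23m hb23m'
    -- the key identity
    have hid : 4 * ∑ i, (Φ.mulVec x) i ^ 2 =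
        3 * ((∑ i, (Φ.mulVec (x₁ + x₂)) i ^ 2) + (∑ i, (Φ.mulVec (x₁ + x₃)) i ^ 2) +
          (∑ i, (Φ.mulVec (x₂ + x₃)) i ^ 2)) -
        ((∑ i, (Φ.mulVec (x₁ - x₂)) i ^ 2) + (∑ i, (Φ.mulVec (x₁ - x₃)) i ^ 2) +
          (∑ i, (Φ.mulVec (x₂ - x₃)) i ^ 2)) := by
      have hpt : ∀ m, 4 * (Φ.mulVec x) m ^ 2 =
          3 * ((Φ.mulVec (x₁ + x₂)) m ^ 2 + (Φ.mulVec (x₁ + x₃)) m ^ 2 +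
            (Φ.mulVec (x₂ + x₃)) m ^ 2) -
          ((Φ.mulVec (x₁ - x₂)) m ^ 2 + (Φ.mulVec (x₁ - x₃)) m ^ 2 +
            (Φ.mulVec (x₂ - x₃)) m ^ 2) := by
        intro m
        have e0 : Φ.mulVec x m = Φ.mulVec x₁ m + Φ.mulVec x₂ m + Φ.mulVec x₃ m := by
          rw [hsum, Matrix.mulVec_add, Matrix.mulVec_add]; rfl
        have e12p : Φ.mulVec (x₁ + x₂) m = Φ.mulVec x₁ m + Φ.mulVec x₂ m := by
          rw [Matrix.mulVec_add]; rfl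
        have e13p : Φ.mulVec (x₁ + x₃) m = Φ.mulVec x₁ m + Φ.mulVec x₃ m := by
          rw [Matrix.mulVec_add]; rfl
        have e23p : Φ.mulVec (x₂ + x₃) m = Φ.mulVec x₂ m + Φ.mulVec x₃ m := by
          rw [Matrix.mulVec_add]; rfl
        have e12m : Φ.mulVec (x₁ - x₂) m = Φ.mulVec x₁ m - Φ.mulVec x₂ m := by
          rw [Matrix.mulVec_sub]; rfl
        have e13m : Φ.mulVec (x₁ - x₃) m = Φ.mulVec x₁ m - Φ.mulVec x₃ m := by
          rw [Matrix.mulVec_sub]; rfl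
        have e23m : Φ.mulVec (x₂ - x₃) m = Φ.mulVec x₂ m - Φ.mulVec x₃ m := by
          rw [Matrix.mulVec_sub]; rfl
        rw [e0, e12p, e13p, e23p, e12m, e13m, e23m]; ring
      calc 4 * ∑ i, (Φ.mulVec x) i ^ 2 = ∑ i, 4 * (Φ.mulVec x) i ^ 2 := by
            rw [Finset.mul_sum]
        _ = ∑ i, (3 * ((Φ.mulVec (x₁ + x₂)) i ^ 2 + (Φ.mulVec (x₁ + x₃)) i ^ 2 +
              (Φ.mulVec (x₂ + x₃)) i ^ 2) -
            ((Φ.mulVec (x₁ - x₂)) i ^ 2 + (Φ.mulVec (x₁ - x₃)) i ^ 2 +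
              (Φ.mulVec (x₂ - x₃)) i ^ 2)) := Finset.sum_congr rfl fun i _ => hpt i
        _ = _ := by
            rw [Finset.sum_sub_distrib]
            congr 1
            · rw [← Finset.mul_sum]
              congr 1
              rw [Finset.sum_add_distrib, Finset.sum_add_distrib]
            · rw [Finset.sum_add_distrib, Finset.sum_add_distrib]
    rw [hnx]
    constructor
    · nlinarith [hid, hb12m, hb13m, hb23m, hb12p, hb13p, hb23p]
    · nlinarith [hid, hb12p', hb13p', hb23p', hb12m', hb13m', hb23m']
  have hle2 : RIC Φ (K + n_f + B) ≤ 2 * δ := RIC_le Φ _ hmem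
  have : 3 * Real.sqrt B / (Real.sqrt K + Real.sqrt B) = 3 * r := by
    rw [hr]; ring
  rw [this] at hδ
  linarith
end

section
/- Let K and B be positive integers with K ≥ (3+2√B)², let n_f be a nonnegative integer with 1 ≤ n_f + B ≤ ⌈K/2⌉, and let n_c be a positive integer with (8K+4√(BK)−4B)/9 ≤ n_c < K. Then 3√B/(√K+√B) ≤ √B/(√(K−n_c)+√B), and for every matrix Φ ∈ ℝ^{M×N} with 3⌈K/2⌉ ≤ N whose restricted isometry constant satisfies 3√B/(√K+√B) ≤ δ_{K+n_f+B} ≤ √B/(√(K−n_c)+√B), the condition δ_{K+B} < √B/(√K+√B) fails (indeed δ_{K+B} > √B/(√K+√B)). In other words, the recovery condition δ_{K+n_f+B} < √B/(√(K−n_c)+√B) is less restrictive than the condition δ_{K+B} < √B/(√K+√B). -/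
open scoped BigOperators
open Matrix

namespace StmtAux

def RSet {M N : ℕ} (Φ : Matrix (Fin M) (Fin N) ℝ) (L : ℕ) : Set ℝ :=
  {δ : ℝ | 0 ≤ δ ∧ ∀ x : Fin N → ℝ, SparseLe L x →
    (1 - δ) * ∑ i, x i ^ 2 ≤ ∑ i, (Φ.mulVec x) i ^ 2 ∧
      ∑ i, (Φ.mulVec x) i ^ 2 ≤ (1 + δ) * ∑ i, x i ^ 2}

lemma RIC_eq {M N : ℕ} (Φ : Matrix (Fin M) (Fin N) ℝ) (L : ℕ) :
    RIC Φ L = sInf (RSet Φ L) := rfl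

lemma RSet_bddBelow {M N : ℕ} (Φ : Matrix (Fin M) (Fin N) ℝ) (L : ℕ) :
    BddBelow (RSet Φ L) := ⟨0, fun _ hδ => hδ.1⟩

lemma RSet_nonempty {M N : ℕ} (Φ : Matrix (Fin M) (Fin N) ℝ) (L : ℕ) :
    (RSet Φ L).Nonempty := by
  refine ⟨1 + ∑ i, ∑ j, Φ i j ^ 2, by positivity, fun x _ => ?_⟩
  have hQ0 : (0:ℝ) ≤ ∑ i, x i ^ 2 := by positivity
  have hP0 : (0:ℝ) ≤ ∑ i, (Φ.mulVec x) i ^ 2 := by positivity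
  have hC0 : (0:ℝ) ≤ ∑ i, ∑ j, Φ i j ^ 2 := by positivity
  have hCS : ∑ i, (Φ.mulVec x) i ^ 2 ≤ (∑ i, ∑ j, Φ i j ^ 2) * ∑ j, x j ^ 2 := by
    rw [Finset.sum_mul]
    refine Finset.sum_le_sum fun i _ => ?_
    have := Finset.sum_mul_sq_le_sq_mul_sq Finset.univ (fun j => Φ i j) x
    simpa [Matrix.mulVec, dotProduct] using this
  constructor
  · nlinarith [mul_nonneg hC0 hQ0]
  · nlinarith [mul_nonneg hC0 hQ0]

lemma RIC_nonneg {M N : ℕ} (Φ : Matrix (Fin M) (Fin N) ℝ) (L : ℕ) :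
    0 ≤ RIC Φ L :=
  le_csInf (RSet_nonempty Φ L) fun _ hδ => hδ.1

lemma mem_RSet_of_gt {M N : ℕ} {Φ : Matrix (Fin M) (Fin N) ℝ} {L : ℕ} {δ : ℝ}
    (h : RIC Φ L < δ) : δ ∈ RSet Φ L := by
  obtain ⟨a, haS, halt⟩ := exists_lt_of_csInf_lt (RSet_nonempty Φ L) (by rw [← RIC_eq]; exact h)
  refine ⟨le_trans haS.1 halt.le, fun x hx => ?_⟩
  have hQ0 : (0:ℝ) ≤ ∑ i, x i ^ 2 := by positivity
  obtain ⟨h1, h2⟩ := haS.2 x hx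
  constructor
  · refine le_trans ?_ h1
    exact mul_le_mul_of_nonneg_right (by linarith) hQ0
  · refine le_trans h2 ?_
    exact mul_le_mul_of_nonneg_right (by linarith) hQ0

lemma RIC_sandwich {M N : ℕ} (Φ : Matrix (Fin M) (Fin N) ℝ) (L : ℕ)
    (x : Fin N → ℝ) (hx : SparseLe L x) :
    (1 - RIC Φ L) * ∑ i, x i ^ 2 ≤ ∑ i, (Φ.mulVec x) i ^ 2 ∧
      ∑ i, (Φ.mulVec x) i ^ 2 ≤ (1 + RIC Φ L) * ∑ i, x i ^ 2 := by
  set r := RIC Φ L with hr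
  set Q := ∑ i, x i ^ 2 with hQdef
  set P := ∑ i, (Φ.mulVec x) i ^ 2 with hPdef
  have hQ0 : (0:ℝ) ≤ Q := by positivity
  have hP0 : (0:ℝ) ≤ P := by positivity
  have key : ∀ η : ℝ, 0 < η → (1 - (r + η)) * Q ≤ P ∧ P ≤ (1 + (r + η)) * Q := by
    intro η hη
    exact (mem_RSet_of_gt (by linarith : RIC Φ L < r + η)).2 x hx
  constructor
  · by_contra hcon
    push_neg at hcon
    have hQpos : 0 < Q := by
      rcases lt_or_eq_of_le hQ0 with h | h
      · exact h
      · exfalso; rw [← h] at hcon; nlinarith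
    set η := ((1 - r) * Q - P) / (2 * Q) with hη
    have hηpos : 0 < η := by
      apply div_pos (by linarith) (by linarith)
    have hEQ : η * Q = ((1 - r) * Q - P) / 2 := by
      rw [hη]
      field_simp
    have := (key η hηpos).1
    nlinarith
  · by_contra hcon
    push_neg at hcon
    have hQpos : 0 < Q := by
      rcases lt_or_eq_of_le hQ0 with h | h
      · exact h
      · exfalso
        have hx0 : x = 0 := by
          funext i
          have hz := (Finset.sum_eq_zero_iff_of_nonneg
            (fun i _ => sq_nonneg (x i))).mp h.symm i (Finset.mem_univ i)
          exact pow_eq_zero_iff two_ne_zero |>.mp hz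
        have hP : P = 0 := by
          simp [hPdef, hx0, Matrix.mulVec_zero]
        rw [← h, hP] at hcon
        nlinarith
    set η := (P - (1 + r) * Q) / (2 * Q) with hη
    have hηpos : 0 < η := by
      apply div_pos (by linarith) (by linarith)
    have hEQ : η * Q = (P - (1 + r) * Q) / 2 := by
      rw [hη]
      field_simp
    have := (key η hηpos).2
    nlinarith

end StmtAux

namespace StmtAux

lemma sparse_mono {N L L' : ℕ} (h : L ≤ L') {x : Fin N → ℝ} (hx : SparseLe L x) :
    SparseLe L' x := le_trans hx h

lemma sparse_add {N a b : ℕ} {u v : Fin N → ℝ} (hu : SparseLe a u) (hv : SparseLe b v) :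
    SparseLe (a + b) (u + v) := by
  classical
  unfold SparseLe at *
  calc (Finset.univ.filter fun i => (u + v) i ≠ 0).card
      ≤ ((Finset.univ.filter fun i => u i ≠ 0) ∪ (Finset.univ.filter fun i => v i ≠ 0)).card := by
        apply Finset.card_le_card
        intro i hi
        simp only [Finset.mem_filter, Finset.mem_union, Finset.mem_univ, true_and,
          Pi.add_apply] at hi ⊢
        by_contra hc
        push_neg at hc
        exact hi (by rw [hc.1, hc.2, add_zero])
    _ ≤ _ := le_trans (Finset.card_union_le _ _) (add_le_add hu hv)

lemma sparse_neg {N a : ℕ} {v : Fin N → ℝ} (hv : SparseLe a v) : SparseLe a (-v) := by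
  unfold SparseLe at *
  simpa using hv

lemma sparse_sub {N a b : ℕ} {u v : Fin N → ℝ} (hu : SparseLe a u) (hv : SparseLe b v) :
    SparseLe (a + b) (u - v) := by
  have := sparse_add hu (sparse_neg hv)
  simpa [sub_eq_add_neg] using this

lemma exists_split {N m : ℕ} (x : Fin N → ℝ) (hx : SparseLe (3 * m) x) :
    ∃ x1 x2 x3 : Fin N → ℝ, x = x1 + x2 + x3 ∧
      SparseLe m x1 ∧ SparseLe m x2 ∧ SparseLe m x3 ∧
      (∀ i, x1 i * x2 i = 0) ∧ (∀ i, x1 i * x3 i = 0) ∧ (∀ i, x2 i * x3 i = 0) := by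
  classical
  set F := Finset.univ.filter (fun i => x i ≠ 0) with hF
  obtain ⟨F1, hF1sub, hF1card⟩ := Finset.exists_subset_card_eq (s := F) (min_le_right m F.card)
  set F' := F \ F1 with hF'
  obtain ⟨F2, hF2sub, hF2card⟩ := Finset.exists_subset_card_eq (s := F') (min_le_right m F'.card)
  set F3 := F' \ F2 with hF3
  have hF'card : F'.card = F.card - F1.card := Finset.card_sdiff_of_subset hF1sub
  have hF3card : F3.card = F'.card - F2.card := Finset.card_sdiff_of_subset hF2sub
  have hFcard : F.card ≤ 3 * m := hx
  refine ⟨fun i => if i ∈ F1 then x i else 0, fun i => if i ∈ F2 then x i else 0,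
    fun i => if i ∈ F3 then x i else 0, ?_, ?_, ?_, ?_, ?_, ?_, ?_⟩
  · funext i
    by_cases h1 : i ∈ F1
    · have h2 : i ∉ F2 := fun h => (Finset.mem_sdiff.mp (hF2sub h)).2 h1
      have h3 : i ∉ F3 := fun h => (Finset.mem_sdiff.mp (Finset.mem_sdiff.mp h).1).2 h1
      simp [h1, h2, h3]
    · by_cases h2 : i ∈ F2
      · have h3 : i ∉ F3 := fun h => (Finset.mem_sdiff.mp h).2 h2
        simp [h1, h2, h3]
      · by_cases h3 : i ∈ F3
        · simp [h1, h2, h3]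
        · have hiF : i ∉ F := by
            intro hiF
            exact h3 (Finset.mem_sdiff.mpr ⟨Finset.mem_sdiff.mpr ⟨hiF, h1⟩, h2⟩)
          have : x i = 0 := by
            by_contra hxi
            exact hiF (by simp [hF, hxi])
          simp [h1, h2, h3, this]
  · unfold SparseLe
    calc _ ≤ F1.card := by
          apply Finset.card_le_card
          intro i hi
          simp only [Finset.mem_filter, Finset.mem_univ, true_and] at hi
          by_contra h; simp [h] at hi
      _ ≤ m := by omega
  · unfold SparseLe
    calc _ ≤ F2.card := by
          apply Finset.card_le_card
          intro i hi
          simp only [Finset.mem_filter, Finset.mem_univ, true_and] at hi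
          by_contra h; simp [h] at hi
      _ ≤ m := by omega
  · unfold SparseLe
    calc _ ≤ F3.card := by
          apply Finset.card_le_card
          intro i hi
          simp only [Finset.mem_filter, Finset.mem_univ, true_and] at hi
          by_contra h; simp [h] at hi
      _ ≤ m := by omega
  · intro i
    by_cases h1 : i ∈ F1
    · have h2 : i ∉ F2 := fun h => (Finset.mem_sdiff.mp (hF2sub h)).2 h1
      simp [h1, h2]
    · simp [h1]
  · intro i
    by_cases h1 : i ∈ F1
    · have h3 : i ∉ F3 := fun h => (Finset.mem_sdiff.mp (Finset.mem_sdiff.mp h).1).2 h1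
      simp [h1, h3]
    · simp [h1]
  · intro i
    by_cases h2 : i ∈ F2
    · have h3 : i ∉ F3 := fun h => (Finset.mem_sdiff.mp h).2 h2
      simp [h2, h3]
    · simp [h2]

lemma sum_sq_add {M : ℕ} (w z : Fin M → ℝ) :
    ∑ i, (w i + z i) ^ 2 = ∑ i, w i ^ 2 + ∑ i, z i ^ 2 + 2 * ∑ i, w i * z i := by
  rw [Finset.mul_sum, ← Finset.sum_add_distrib, ← Finset.sum_add_distrib]
  exact Finset.sum_congr rfl fun i _ => by ring

lemma sum_sq_sub {M : ℕ} (w z : Fin M → ℝ) :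
    ∑ i, (w i - z i) ^ 2 = ∑ i, w i ^ 2 + ∑ i, z i ^ 2 - 2 * ∑ i, w i * z i := by
  have := sum_sq_add w (-z)
  simp only [Pi.neg_apply] at this
  calc ∑ i, (w i - z i) ^ 2 = ∑ i, (w i + -z i) ^ 2 := by
        exact Finset.sum_congr rfl fun i _ => by ring
    _ = _ := by
        rw [this]
        have h1 : ∑ i, (-z i) ^ 2 = ∑ i, z i ^ 2 := Finset.sum_congr rfl fun i _ => by ring
        have h2 : ∑ i, w i * -z i = -∑ i, w i * z i := by
          rw [← Finset.sum_neg_distrib]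
          exact Finset.sum_congr rfl fun i _ => by ring
        rw [h1, h2]; ring

lemma sum_sq_add3 {M : ℕ} (w z t : Fin M → ℝ) :
    ∑ i, (w i + z i + t i) ^ 2 = ∑ i, w i ^ 2 + ∑ i, z i ^ 2 + ∑ i, t i ^ 2
      + 2 * ∑ i, w i * z i + 2 * ∑ i, w i * t i + 2 * ∑ i, z i * t i := by
  simp only [Finset.mul_sum, ← Finset.sum_add_distrib]
  exact Finset.sum_congr rfl fun i _ => by ring

end StmtAux

namespace StmtAux

lemma dev_bound {V S r T : ℝ} (h1 : (1 - r) * S ≤ V) (h2 : V ≤ (1 + r) * S)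
    (hrT : r ≤ T) (hS : 0 ≤ S) : -(T * S) ≤ V - S ∧ V - S ≤ T * S := by
  have := mul_le_mul_of_nonneg_right hrT hS
  constructor <;> nlinarith

lemma part1 (K B n_c : ℕ) (hK : 0 < K) (hB : 0 < B)
    (hKB : ((3:ℝ) + 2*Real.sqrt B)^2 ≤ K) (hncK : n_c < K)
    (hnclb : (8*K + 4*Real.sqrt ((B:ℝ)*K) - 4*B)/9 ≤ n_c) :
    3 * Real.sqrt B / (Real.sqrt K + Real.sqrt B)
      ≤ Real.sqrt B / (Real.sqrt ((K:ℝ) - n_c) + Real.sqrt B) := by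
  have ha : 0 < Real.sqrt B := Real.sqrt_pos.mpr (by exact_mod_cast hB)
  have hk : 0 < Real.sqrt K := Real.sqrt_pos.mpr (by exact_mod_cast hK)
  have hKnc : (0:ℝ) ≤ (K:ℝ) - n_c := by
    have : (n_c:ℝ) ≤ K := by exact_mod_cast hncK.le
    linarith
  have hw : 0 ≤ Real.sqrt ((K:ℝ) - n_c) := Real.sqrt_nonneg _
  have hk2 : Real.sqrt K ^ 2 = (K:ℝ) := Real.sq_sqrt (by positivity)
  have hw2 : Real.sqrt ((K:ℝ) - n_c) ^ 2 = (K:ℝ) - n_c := Real.sq_sqrt hKnc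
  have hb2 : Real.sqrt B ^ 2 = (B:ℝ) := Real.sq_sqrt (by positivity)
  have hak : Real.sqrt B * Real.sqrt K = Real.sqrt ((B:ℝ)*K) := by
    rw [← Real.sqrt_mul (by positivity)]
  have hka : 3 + 2*Real.sqrt B ≤ Real.sqrt K := by
    have h := Real.sqrt_le_sqrt hKB
    rwa [Real.sqrt_sq (by positivity)] at h
  have hsq : (3*Real.sqrt ((K:ℝ)-n_c))^2 ≤ (Real.sqrt K - 2*Real.sqrt B)^2 := by
    nlinarith [hnclb, hw2, hk2, hak, hb2]
  have hmain : 3*Real.sqrt ((K:ℝ)-n_c) ≤ Real.sqrt K - 2*Real.sqrt B := by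
    have h1 : 0 ≤ 3*Real.sqrt ((K:ℝ)-n_c) := by positivity
    have h2 : 0 ≤ Real.sqrt K - 2*Real.sqrt B := by linarith
    nlinarith [hsq]
  rw [div_le_div_iff₀ (by positivity) (by positivity)]
  nlinarith [mul_le_mul_of_nonneg_left hmain ha.le]

end StmtAux

open StmtAux in
theorem stmt_9 (K B : ℕ) (hK : 0 < K) (hB : 0 < B)
    (hKB : ((3 : ℝ) + 2 * Real.sqrt B) ^ 2 ≤ K)
    (n_f : ℕ) (h1 : 1 ≤ n_f + B) (h2 : n_f + B ≤ (K + 1) / 2)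
    (n_c : ℕ) (hnc0 : 0 < n_c) (hncK : n_c < K)
    (hnclb : (8 * K + 4 * Real.sqrt ((B : ℝ) * K) - 4 * B) / 9 ≤ n_c) :
    3 * Real.sqrt B / (Real.sqrt K + Real.sqrt B)
        ≤ Real.sqrt B / (Real.sqrt ((K : ℝ) - n_c) + Real.sqrt B) ∧
      ∀ (M N : ℕ) (Φ : Matrix (Fin M) (Fin N) ℝ), 3 * ((K + 1) / 2) ≤ N →
        3 * Real.sqrt B / (Real.sqrt K + Real.sqrt B) ≤ RIC Φ (K + n_f + B) →
        RIC Φ (K + n_f + B) ≤ Real.sqrt B / (Real.sqrt ((K : ℝ) - n_c) + Real.sqrt B) →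
        RIC Φ (K + B) > Real.sqrt B / (Real.sqrt K + Real.sqrt B) := by
  constructor
  · exact part1 K B n_c hK hB hKB hncK hnclb
  intro M N Φ hN hlo hhi
  have ha : 0 < Real.sqrt B := Real.sqrt_pos.mpr (by exact_mod_cast hB)
  have hk : 0 < Real.sqrt K := Real.sqrt_pos.mpr (by exact_mod_cast hK)
  set T : ℝ := Real.sqrt B / (Real.sqrt K + Real.sqrt B) with hTdef
  have hT : 0 < T := div_pos ha (by linarith)
  by_contra hcon
  push_neg at hcon
  -- hcon : RIC Φ (K + B) ≤ T
  have h3T : 3 * Real.sqrt B / (Real.sqrt K + Real.sqrt B) = 3 * T := by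
    rw [hTdef]; ring
  have h52 : 5/2 * T < RIC Φ (K + n_f + B) := by
    rw [h3T] at hlo; linarith
  have hmem : (5/2 * T) ∉ RSet Φ (K + n_f + B) := by
    intro hm
    have : RIC Φ (K + n_f + B) ≤ 5/2 * T := csInf_le (RSet_bddBelow Φ _) hm
    linarith
  have hvx : ∃ x : Fin N → ℝ, SparseLe (K + n_f + B) x ∧
      ¬((1 - 5/2 * T) * ∑ i, x i ^ 2 ≤ ∑ i, (Φ.mulVec x) i ^ 2 ∧
        ∑ i, (Φ.mulVec x) i ^ 2 ≤ (1 + 5/2 * T) * ∑ i, x i ^ 2) := by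
    by_contra h
    push_neg at h
    exact hmem ⟨by positivity, fun x hx => h x hx⟩
  obtain ⟨x, hxs, hviol⟩ := hvx
  -- split x into three pieces
  have hsm : K + n_f + B ≤ 3 * ((K + 1) / 2) := by omega
  obtain ⟨x1, x2, x3, hsum, hs1, hs2, hs3, h12, h13, h23⟩ :=
    exists_split x (sparse_mono hsm hxs)
  have hm1 : (K + 1) / 2 ≤ K + B := by omega
  have hm2 : (K + 1) / 2 + (K + 1) / 2 ≤ K + B := by omega
  have hrT : RIC Φ (K + B) ≤ T := hcon
  -- abbreviations as equations
  have hz12 : ∑ i, x1 i * x2 i = 0 := Finset.sum_eq_zero fun i _ => h12 i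
  have hz13 : ∑ i, x1 i * x3 i = 0 := Finset.sum_eq_zero fun i _ => h13 i
  have hz23 : ∑ i, x2 i * x3 i = 0 := Finset.sum_eq_zero fun i _ => h23 i
  -- Q decomposition
  have hQ : ∑ i, x i ^ 2 = ∑ i, x1 i ^ 2 + ∑ i, x2 i ^ 2 + ∑ i, x3 i ^ 2 := by
    rw [hsum]
    simp only [Pi.add_apply]
    rw [sum_sq_add3, hz12, hz13, hz23]
    ring
  -- P decomposition
  have hP : ∑ i, (Φ.mulVec x) i ^ 2 =
      ∑ i, (Φ.mulVec x1) i ^ 2 + ∑ i, (Φ.mulVec x2) i ^ 2 + ∑ i, (Φ.mulVec x3) i ^ 2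
      + 2 * ∑ i, (Φ.mulVec x1) i * (Φ.mulVec x2) i
      + 2 * ∑ i, (Φ.mulVec x1) i * (Φ.mulVec x3) i
      + 2 * ∑ i, (Φ.mulVec x2) i * (Φ.mulVec x3) i := by
    rw [hsum, Matrix.mulVec_add, Matrix.mulVec_add]
    simp only [Pi.add_apply]
    exact sum_sq_add3 _ _ _
  -- positivity of q's
  have hq1 : (0:ℝ) ≤ ∑ i, x1 i ^ 2 := by positivity
  have hq2 : (0:ℝ) ≤ ∑ i, x2 i ^ 2 := by positivity
  have hq3 : (0:ℝ) ≤ ∑ i, x3 i ^ 2 := by positivity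
  -- single bounds
  have b1 := dev_bound (RIC_sandwich Φ (K+B) x1 (sparse_mono hm1 hs1)).1
    (RIC_sandwich Φ (K+B) x1 (sparse_mono hm1 hs1)).2 hrT hq1
  have b2 := dev_bound (RIC_sandwich Φ (K+B) x2 (sparse_mono hm1 hs2)).1
    (RIC_sandwich Φ (K+B) x2 (sparse_mono hm1 hs2)).2 hrT hq2
  have b3 := dev_bound (RIC_sandwich Φ (K+B) x3 (sparse_mono hm1 hs3)).1
    (RIC_sandwich Φ (K+B) x3 (sparse_mono hm1 hs3)).2 hrT hq3
  -- pair bounds (plus and minus)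
  have pairBound : ∀ (u v : Fin N → ℝ), SparseLe (K+B) (u + v) → SparseLe (K+B) (u - v) →
      (∑ i, u i * v i = 0) →
      (-(T * (∑ i, u i ^ 2 + ∑ i, v i ^ 2)) ≤
          (∑ i, (Φ.mulVec u) i ^ 2 + ∑ i, (Φ.mulVec v) i ^ 2
            + 2 * ∑ i, (Φ.mulVec u) i * (Φ.mulVec v) i) - (∑ i, u i ^ 2 + ∑ i, v i ^ 2) ∧
        (∑ i, (Φ.mulVec u) i ^ 2 + ∑ i, (Φ.mulVec v) i ^ 2
            + 2 * ∑ i, (Φ.mulVec u) i * (Φ.mulVec v) i) - (∑ i, u i ^ 2 + ∑ i, v i ^ 2)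
          ≤ T * (∑ i, u i ^ 2 + ∑ i, v i ^ 2)) ∧
      (-(T * (∑ i, u i ^ 2 + ∑ i, v i ^ 2)) ≤
          (∑ i, (Φ.mulVec u) i ^ 2 + ∑ i, (Φ.mulVec v) i ^ 2
            - 2 * ∑ i, (Φ.mulVec u) i * (Φ.mulVec v) i) - (∑ i, u i ^ 2 + ∑ i, v i ^ 2) ∧
        (∑ i, (Φ.mulVec u) i ^ 2 + ∑ i, (Φ.mulVec v) i ^ 2
            - 2 * ∑ i, (Φ.mulVec u) i * (Φ.mulVec v) i) - (∑ i, u i ^ 2 + ∑ i, v i ^ 2)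
          ≤ T * (∑ i, u i ^ 2 + ∑ i, v i ^ 2)) := by
    intro u v hadd hsub hz
    have hqu : (0:ℝ) ≤ ∑ i, u i ^ 2 := by positivity
    have hqv : (0:ℝ) ≤ ∑ i, v i ^ 2 := by positivity
    have equ : ∑ i, ((u + v) i) ^ 2 = ∑ i, u i ^ 2 + ∑ i, v i ^ 2 := by
      simp only [Pi.add_apply]
      rw [sum_sq_add, hz]; ring
    have equ' : ∑ i, ((u - v) i) ^ 2 = ∑ i, u i ^ 2 + ∑ i, v i ^ 2 := by
      simp only [Pi.sub_apply]
      rw [sum_sq_sub, hz]; ring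
    have ePu : ∑ i, (Φ.mulVec (u + v)) i ^ 2 =
        ∑ i, (Φ.mulVec u) i ^ 2 + ∑ i, (Φ.mulVec v) i ^ 2
          + 2 * ∑ i, (Φ.mulVec u) i * (Φ.mulVec v) i := by
      rw [Matrix.mulVec_add]
      simp only [Pi.add_apply]
      exact sum_sq_add _ _
    have ePu' : ∑ i, (Φ.mulVec (u - v)) i ^ 2 =
        ∑ i, (Φ.mulVec u) i ^ 2 + ∑ i, (Φ.mulVec v) i ^ 2
          - 2 * ∑ i, (Φ.mulVec u) i * (Φ.mulVec v) i := by
      rw [Matrix.mulVec_sub]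
      simp only [Pi.sub_apply]
      exact sum_sq_sub _ _
    obtain ⟨su1, su2⟩ := RIC_sandwich Φ (K+B) (u + v) hadd
    rw [equ, ePu] at su1 su2
    obtain ⟨sv1, sv2⟩ := RIC_sandwich Φ (K+B) (u - v) hsub
    rw [equ', ePu'] at sv1 sv2
    exact ⟨dev_bound su1 su2 hrT (by linarith), dev_bound sv1 sv2 hrT (by linarith)⟩
  obtain ⟨p12, m12⟩ := pairBound x1 x2 (sparse_mono hm2 (sparse_add hs1 hs2))
    (sparse_mono hm2 (sparse_sub hs1 hs2)) hz12
  obtain ⟨p13, m13⟩ := pairBound x1 x3 (sparse_mono hm2 (sparse_add hs1 hs3))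
    (sparse_mono hm2 (sparse_sub hs1 hs3)) hz13
  obtain ⟨p23, m23⟩ := pairBound x2 x3 (sparse_mono hm2 (sparse_add hs2 hs3))
    (sparse_mono hm2 (sparse_sub hs2 hs3)) hz23
  -- x is nonzero
  have hQnn : (0:ℝ) ≤ ∑ i, x i ^ 2 := by positivity
  have hQpos : 0 < ∑ i, x i ^ 2 := by
    rcases lt_or_eq_of_le hQnn with h | h
    · exact h
    · exfalso
      have hx0 : x = 0 := by
        funext i
        exact pow_eq_zero_iff two_ne_zero |>.mp
          ((Finset.sum_eq_zero_iff_of_nonneg (fun i _ => sq_nonneg (x i))).mp h.symm i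
            (Finset.mem_univ i))
      rw [hx0] at hviol
      refine hviol ⟨?_, ?_⟩ <;> simp [Matrix.mulVec_zero]
  rw [hQ] at hQpos
  have hTQ : 0 < T * (∑ i, x1 i ^ 2 + ∑ i, x2 i ^ 2 + ∑ i, x3 i ^ 2) := mul_pos hT hQpos
  rw [hQ, hP] at hviol
  -- cross term bounds
  have c12lb : -(T * (∑ i, x1 i ^ 2 + ∑ i, x2 i ^ 2)) ≤
      2 * ∑ i, (Φ.mulVec x1) i * (Φ.mulVec x2) i := by linarith [p12.1, m12.2]
  have c12ub : 2 * ∑ i, (Φ.mulVec x1) i * (Φ.mulVec x2) i ≤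
      T * (∑ i, x1 i ^ 2 + ∑ i, x2 i ^ 2) := by linarith [p12.2, m12.1]
  have c13lb : -(T * (∑ i, x1 i ^ 2 + ∑ i, x3 i ^ 2)) ≤
      2 * ∑ i, (Φ.mulVec x1) i * (Φ.mulVec x3) i := by linarith [p13.1, m13.2]
  have c13ub : 2 * ∑ i, (Φ.mulVec x1) i * (Φ.mulVec x3) i ≤
      T * (∑ i, x1 i ^ 2 + ∑ i, x3 i ^ 2) := by linarith [p13.2, m13.1]
  have c23lb : -(T * (∑ i, x2 i ^ 2 + ∑ i, x3 i ^ 2)) ≤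
      2 * ∑ i, (Φ.mulVec x2) i * (Φ.mulVec x3) i := by linarith [p23.1, m23.2]
  have c23ub : 2 * ∑ i, (Φ.mulVec x2) i * (Φ.mulVec x3) i ≤
      T * (∑ i, x2 i ^ 2 + ∑ i, x3 i ^ 2) := by linarith [p23.2, m23.1]
  rcases not_and_or.mp hviol with hv | hv <;> push_neg at hv
  · -- lower inequality violated : P - Q < -(5/2) T Q
    linarith [b1.2, b2.2, b3.2, p12.1, p13.1, p23.1, c12ub, c13ub, c23ub, hTQ]
  · -- upper inequality violated : P - Q > (5/2) T Q
    linarith [b1.1, b2.1, b3.1, p12.2, p13.2, p23.2, c12lb, c13lb, c23lb, hTQ]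
end

section
/- Let Φ ∈ ℝ^{M×N} with columns φ_j, let x ∈ ℝ^N have support T with |T| = K, and set y = Φx. Let T^b ⊆ {1,…,N} with n_c = |T^b ∩ T| and n_f = |T^b \ T|, and let x̂ ∈ ℝ^{|T^b|} minimize ‖y − Φ_{T^b} z‖₂, with residue r^b = y − Φ_{T^b} x̂, so that r^b = Φ_{T∪T^b} w for the vector w ∈ ℝ^{|T∪T^b|} obtained by restricting x − x̂ₑ to T∪T^b, where x̂ₑ ∈ ℝ^N agrees with x̂ on T^b and is zero elsewhere. Let B be a positive integer. Then max over J ⊆ {1,…,N} with |J| = B of ‖Φ_J^T r^b‖₂ is at least c (1 − δ_{K+n_f}) ‖w‖₂, where c = min(√(B/(K−n_c)), 1) and δ_{K+n_f} is the restricted isometry constant of Φ of order K+n_f. -/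
open scoped BigOperators
open Matrix

lemma ls_orth {M : ℕ} {ι : Type*} [Fintype ι] [DecidableEq ι]
    (A : Matrix (Fin M) ι ℝ) (y : Fin M → ℝ) (xh : ι → ℝ)
    (hmin : ∀ z, _root_.enorm (y - A.mulVec xh) ≤ _root_.enorm (y - A.mulVec z)) (c : ι) :
    ∑ i, (y - A.mulVec xh) i * A i c = 0 := by
  set r : Fin M → ℝ := y - A.mulVec xh with hr
  set q : ℝ := ∑ i, (A i c)^2 with hqdef
  set d : ℝ := ∑ i, r i * A i c with hd
  have hq : 0 ≤ q := Finset.sum_nonneg fun i _ => sq_nonneg _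
  have key : ∀ t : ℝ, 0 ≤ -(2*t*d) + t^2*q := by
    intro t
    have h := hmin (xh + t • (Pi.single c 1 : ι → ℝ))
    have hAv : y - A.mulVec (xh + t • (Pi.single c 1 : ι → ℝ)) = fun i => r i - t * A i c := by
      rw [Matrix.mulVec_add, Matrix.mulVec_smul, Matrix.mulVec_single]
      funext i
      simp [hr]
      ring
    rw [hAv] at h
    have h0 : 0 ≤ ∑ i, r i ^ 2 := Finset.sum_nonneg fun i _ => sq_nonneg _
    have h2 : 0 ≤ ∑ i, (r i - t * A i c)^2 := Finset.sum_nonneg fun i _ => sq_nonneg _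
    have h1 : ∑ i, r i ^2 ≤ ∑ i, (r i - t * A i c)^2 := by
      unfold _root_.enorm at h
      nlinarith [Real.sq_sqrt h0, Real.sq_sqrt h2, Real.sqrt_nonneg (∑ i, r i ^2),
        Real.sqrt_nonneg (∑ i, (r i - t * A i c)^2)]
    have hx : ∑ i, (r i - t * A i c)^2 = (∑ i, r i^2) - 2*t*d + t^2*q := by
      have he : ∀ i : Fin M, (r i - t * A i c)^2
          = r i ^2 - 2*t*(r i * A i c) + t^2 * (A i c)^2 := fun i => by ring
      simp only [he]
      rw [Finset.sum_add_distrib, Finset.sum_sub_distrib, ← Finset.mul_sum, ← Finset.mul_sum,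
        hd, hqdef]
    linarith [hx ▸ h1]
  have hd0 : d = 0 := by
    rcases eq_or_lt_of_le hq with hq0 | hq0
    · have h := key d
      rw [← hq0] at h
      nlinarith [sq_nonneg d]
    · have h := key (d/q)
      have hq' : q ≠ 0 := ne_of_gt hq0
      have e1 : (d/q)^2 * q = d^2/q := by field_simp
      have e2 : 2*(d/q)*d = 2*(d^2/q) := by field_simp
      rw [e1, e2] at h
      have h3 : d^2/q ≤ 0 := by linarith
      have h4 : 0 ≤ d^2/q := div_nonneg (sq_nonneg d) hq
      have hzero : d^2/q = 0 := le_antisymm h3 h4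
      field_simp at hzero
      simpa using hzero
  exact hd ▸ hd0

lemma top_subset {α : Type*} [DecidableEq α] (U : Finset α) (f : α → ℝ)
    (hf : ∀ j, 0 ≤ f j) (B : ℕ) (hB : 0 < B) (hBU : B ≤ U.card) :
    ∃ J, J ⊆ U ∧ J.card = B ∧ (B:ℝ) * ∑ j ∈ U, f j ≤ (U.card : ℝ) * ∑ j ∈ J, f j := by
  have hne : (U.powersetCard B).Nonempty := Finset.powersetCard_nonempty.mpr hBU
  obtain ⟨J, hJmem, hJmax⟩ := Finset.exists_max_image (U.powersetCard B) (fun J => ∑ j ∈ J, f j) hne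
  rw [Finset.mem_powersetCard] at hJmem
  obtain ⟨hJU, hJB⟩ := hJmem
  refine ⟨J, hJU, hJB, ?_⟩
  have hexch : ∀ j' ∈ U \ J, ∀ j ∈ J, f j' ≤ f j := by
    intro j' hj' j hj
    by_contra hlt
    push_neg at hlt
    have hj'U := (Finset.mem_sdiff.mp hj').1
    have hj'J := (Finset.mem_sdiff.mp hj').2
    have hnm : j' ∉ J.erase j := fun h => hj'J (Finset.mem_of_mem_erase h)
    have hJ'U : insert j' (J.erase j) ⊆ U := by
      intro a ha
      rcases Finset.mem_insert.mp ha with h | h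
      · exact h ▸ hj'U
      · exact hJU (Finset.mem_of_mem_erase h)
    have hcard : (insert j' (J.erase j)).card = B := by
      rw [Finset.card_insert_of_notMem hnm, Finset.card_erase_of_mem hj, hJB]
      omega
    have hsum : ∑ a ∈ J, f a < ∑ a ∈ insert j' (J.erase j), f a := by
      rw [Finset.sum_insert hnm, Finset.sum_erase_eq_sub hj]
      linarith
    have := hJmax _ (Finset.mem_powersetCard.mpr ⟨hJ'U, hcard⟩)
    linarith
  have hJne : J.Nonempty := Finset.card_pos.mp (hJB ▸ hB)
  obtain ⟨j₀, hj₀J, hj₀min⟩ := Finset.exists_min_image J f hJne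
  have h1 : ∑ j ∈ U \ J, f j ≤ ((U.card : ℝ) - B) * f j₀ := by
    have hcs : ((U \ J).card : ℝ) = (U.card : ℝ) - B := by
      rw [Finset.card_sdiff_of_subset hJU, hJB, Nat.cast_sub hBU]
    calc ∑ j ∈ U \ J, f j ≤ ∑ _j ∈ U \ J, f j₀ :=
          Finset.sum_le_sum fun j' hj' => hexch j' hj' j₀ hj₀J
      _ = ((U.card : ℝ) - B) * f j₀ := by rw [Finset.sum_const, nsmul_eq_mul, hcs]
  have h2 : (B:ℝ) * f j₀ ≤ ∑ j ∈ J, f j := by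
    calc (B:ℝ) * f j₀ = ∑ _j ∈ J, f j₀ := by rw [Finset.sum_const, hJB, nsmul_eq_mul]
      _ ≤ ∑ j ∈ J, f j := Finset.sum_le_sum fun j hj => hj₀min j hj
  have hsplit : ∑ j ∈ U, f j = ∑ j ∈ U \ J, f j + ∑ j ∈ J, f j :=
    (Finset.sum_sdiff hJU).symm
  have hSJ : 0 ≤ ∑ j ∈ J, f j := Finset.sum_nonneg fun j _ => hf j
  have hBm : (B:ℝ) ≤ U.card := by exact_mod_cast hBU
  rw [hsplit]
  nlinarith [mul_le_mul_of_nonneg_left h1 (by positivity : (0:ℝ) ≤ B),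
    mul_le_mul_of_nonneg_left h2 (sub_nonneg.mpr hBm), hf j₀]

theorem stmt_11 {M N : ℕ} (Φ : Matrix (Fin M) (Fin N) ℝ)
    (x : Fin N → ℝ) (T : Finset (Fin N)) (hT : ∀ j, j ∈ T ↔ x j ≠ 0)
    (K : ℕ) (hK : T.card = K)
    (y : Fin M → ℝ) (hy : y = Φ.mulVec x)
    (Tb : Finset (Fin N)) (n_c n_f : ℕ)
    (hnc : (Tb ∩ T).card = n_c) (hnf : (Tb \ T).card = n_f)
    (xhat : {j // j ∈ Tb} → ℝ)
    (hxhat : ∀ z : {j // j ∈ Tb} → ℝ,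
      _root_.enorm (y - (colSub Φ Tb).mulVec xhat) ≤ _root_.enorm (y - (colSub Φ Tb).mulVec z))
    (rb : Fin M → ℝ) (hrb : rb = y - (colSub Φ Tb).mulVec xhat)
    (xhatE : Fin N → ℝ)
    (hxhatE : ∀ j : Fin N, xhatE j = if h : j ∈ Tb then xhat ⟨j, h⟩ else 0)
    (w : {j // j ∈ T ∪ Tb} → ℝ) (hw : ∀ j, w j = x j.val - xhatE j.val)
    (B : ℕ) (hB : 0 < B) (hBN : B ≤ N) :
    rb = (colSub Φ (T ∪ Tb)).mulVec w ∧
      ∃ J : Finset (Fin N), J.card = B ∧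
        min (Real.sqrt ((B : ℝ) / ((K : ℝ) - n_c))) 1 * ((1 - RIC Φ (K + n_f)) * _root_.enorm w)
          ≤ _root_.enorm ((colSub Φ J)ᵀ.mulVec rb) := by
  classical
  set v : Fin N → ℝ := fun j => x j - xhatE j with hv
  have hxT : ∀ j, j ∉ T → x j = 0 := by
    intro j hj; by_contra h; exact hj ((hT j).mpr h)
  have hxE0 : ∀ j, j ∉ Tb → xhatE j = 0 := by
    intro j hj; rw [hxhatE j, dif_neg hj]
  have hv0 : ∀ j, j ∉ T ∪ Tb → v j = 0 := by
    intro j hj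
    rw [Finset.mem_union, not_or] at hj
    simp [hv, hxT j hj.1, hxE0 j hj.2]
  have hcolTb : (colSub Φ Tb).mulVec xhat = Φ.mulVec xhatE := by
    funext i
    have h1 : ∀ j : {j // j ∈ Tb}, xhat j = xhatE j.val := by
      intro j; rw [hxhatE, dif_pos j.prop]
    simp only [Matrix.mulVec, dotProduct, colSub, Matrix.of_apply]
    calc ∑ j : {j // j ∈ Tb}, Φ i j.val * xhat j
        = ∑ j : {j // j ∈ Tb}, Φ i j.val * xhatE j.val :=
          Finset.sum_congr rfl fun j _ => by rw [h1]
      _ = ∑ j ∈ Tb, Φ i j * xhatE j := Finset.sum_coe_sort Tb (fun j => Φ i j * xhatE j)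
      _ = ∑ j, Φ i j * xhatE j := Finset.sum_subset (Finset.subset_univ Tb)
            (fun j _ hj => by rw [hxE0 j hj, mul_zero])
  have hrbv : rb = Φ.mulVec v := by
    rw [hrb, hy, hcolTb, ← Matrix.mulVec_sub]
    rfl
  have part1 : rb = (colSub Φ (T ∪ Tb)).mulVec w := by
    rw [hrbv]
    funext i
    simp only [Matrix.mulVec, dotProduct, colSub, Matrix.of_apply]
    calc ∑ j, Φ i j * v j = ∑ j ∈ T ∪ Tb, Φ i j * v j :=
          (Finset.sum_subset (Finset.subset_univ _)
            (fun j _ hj => by rw [hv0 j hj, mul_zero])).symm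
      _ = ∑ j : {j // j ∈ T ∪ Tb}, Φ i j.val * v j.val :=
          (Finset.sum_coe_sort _ fun j => Φ i j * v j).symm
      _ = ∑ j : {j // j ∈ T ∪ Tb}, Φ i j.val * w j :=
          Finset.sum_congr rfl fun j _ => by rw [hw]
  set g : Fin N → ℝ := fun j => ∑ i, Φ i j * rb i with hg
  have horth : ∀ j (hj : j ∈ Tb), g j = 0 := by
    intro j hj
    have h0 := ls_orth (colSub Φ Tb) y xhat hxhat ⟨j, hj⟩
    rw [← hrb] at h0
    simpa [hg, colSub, mul_comm] using h0
  have hRqnn : (0:ℝ) ≤ ∑ i, rb i ^ 2 := Finset.sum_nonneg fun i _ => sq_nonneg _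
  have hip : ∑ j, v j * g j = ∑ i, rb i ^ 2 := by
    simp only [hg]
    calc ∑ j, v j * ∑ i, Φ i j * rb i
        = ∑ j, ∑ i, v j * (Φ i j * rb i) := by simp_rw [Finset.mul_sum]
      _ = ∑ i, ∑ j, v j * (Φ i j * rb i) := Finset.sum_comm
      _ = ∑ i, (∑ j, Φ i j * v j) * rb i := by
          refine Finset.sum_congr rfl fun i _ => ?_
          rw [Finset.sum_mul]
          exact Finset.sum_congr rfl fun j _ => by ring
      _ = ∑ i, rb i ^ 2 := by
          refine Finset.sum_congr rfl fun i _ => ?_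
          have h2 : (∑ j, Φ i j * v j) = rb i := by rw [hrbv]; rfl
          rw [h2]; ring
  set U : Finset (Fin N) := T \ Tb with hU
  have hres : ∑ j, v j * g j = ∑ j ∈ U, v j * g j := by
    refine (Finset.sum_subset (Finset.subset_univ U) ?_).symm
    intro j _ hjU
    by_cases hjTb : j ∈ Tb
    · rw [horth j hjTb, mul_zero]
    · have hjT : j ∉ T := fun h => hjU (Finset.mem_sdiff.mpr ⟨h, hjTb⟩)
      rw [hv0 j (by rw [Finset.mem_union]; tauto), zero_mul]
  set W : ℝ := ∑ j, v j ^ 2 with hW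
  have hWnn : 0 ≤ W := Finset.sum_nonneg fun j _ => sq_nonneg _
  have henw : _root_.enorm w = Real.sqrt W := by
    unfold _root_.enorm
    congr 1
    calc ∑ j : {j // j ∈ T ∪ Tb}, w j ^ 2
        = ∑ j : {j // j ∈ T ∪ Tb}, v j.val ^ 2 :=
          Finset.sum_congr rfl fun j _ => by rw [hw]
      _ = ∑ j ∈ T ∪ Tb, v j ^ 2 := Finset.sum_coe_sort _ (fun j => v j ^ 2)
      _ = W := Finset.sum_subset (Finset.subset_univ _)
            (fun j _ hj => by rw [hv0 j hj]; ring)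
  obtain ⟨hδ0, hδprop⟩ := ric_spec Φ (K + n_f)
  set δ : ℝ := RIC Φ (K + n_f) with hδ
  have hsp : SparseLe (K + n_f) v := by
    unfold SparseLe
    have hsub : (Finset.univ.filter fun j => v j ≠ 0) ⊆ T ∪ Tb := by
      intro j hj
      rw [Finset.mem_filter] at hj
      by_contra h
      exact hj.2 (hv0 j h)
    have h2 : (T ∪ Tb).card = n_f + K := by
      rw [Finset.union_comm, ← Finset.card_sdiff_add_card Tb T, hnf, hK]
    calc (Finset.univ.filter fun j => v j ≠ 0).card ≤ (T ∪ Tb).card :=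
          Finset.card_le_card hsub
      _ ≤ K + n_f := by omega
  have hlow : (1 - δ) * W ≤ ∑ i, rb i ^ 2 := by
    have h3 := (hδprop v hsp).1
    rw [hrbv]
    exact h3
  set G : ℝ := ∑ j ∈ U, g j ^ 2 with hG
  have hGnn : 0 ≤ G := Finset.sum_nonneg fun j _ => sq_nonneg _
  have hcs : (∑ i, rb i ^ 2) ^ 2 ≤ W * G := by
    have h1 := Finset.sum_mul_sq_le_sq_mul_sq U v g
    have h2 : (∑ i, rb i ^ 2) = ∑ j ∈ U, v j * g j := by rw [← hip, hres]
    have h3 : ∑ j ∈ U, v j ^ 2 ≤ W :=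
      Finset.sum_le_sum_of_subset_of_nonneg (Finset.subset_univ U)
        (fun j _ _ => sq_nonneg _)
    calc (∑ i, rb i ^ 2) ^ 2 = (∑ j ∈ U, v j * g j) ^ 2 := by rw [h2]
      _ ≤ (∑ j ∈ U, v j ^ 2) * G := h1
      _ ≤ W * G := mul_le_mul_of_nonneg_right h3 hGnn
  have henJ : ∀ J : Finset (Fin N),
      _root_.enorm ((colSub Φ J)ᵀ.mulVec rb) = Real.sqrt (∑ j ∈ J, g j ^ 2) := by
    intro J
    unfold _root_.enorm
    congr 1
    calc ∑ j : {j // j ∈ J}, ((colSub Φ J)ᵀ.mulVec rb) j ^ 2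
        = ∑ j : {j // j ∈ J}, g j.val ^ 2 := rfl
      _ = ∑ j ∈ J, g j ^ 2 := Finset.sum_coe_sort J (fun j => g j ^ 2)
  have hcnn : (0:ℝ) ≤ min (Real.sqrt ((B : ℝ) / ((K : ℝ) - n_c))) 1 :=
    le_min (Real.sqrt_nonneg _) zero_le_one
  by_cases hpos : 0 < (1 - δ) * Real.sqrt W
  · -- nontrivial case
    have hsWnn : 0 ≤ Real.sqrt W := Real.sqrt_nonneg W
    have hsWpos : 0 < Real.sqrt W := by
      rcases lt_or_eq_of_le hsWnn with h | h
      · exact h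
      · exfalso; rw [← h] at hpos; simp at hpos
    have ha : 0 < 1 - δ := by
      rcases mul_pos_iff.mp hpos with ⟨h1, _⟩ | ⟨_, h2⟩
      · exact h1
      · linarith
    have hWpos : 0 < W := by nlinarith [Real.sq_sqrt hWnn]
    have hG1 : (1 - δ) ^ 2 * W ≤ G := by
      nlinarith [pow_le_pow_left₀ (by positivity : (0:ℝ) ≤ (1 - δ) * W) hlow 2,
        hcs, hWpos, hGnn, hRqnn]
    have hsqG : (1 - δ) * Real.sqrt W ≤ Real.sqrt G := by
      rw [show (1 - δ) * Real.sqrt W = Real.sqrt ((1 - δ) ^ 2 * W) by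
        rw [Real.sqrt_mul (sq_nonneg _), Real.sqrt_sq (le_of_lt ha)]]
      exact Real.sqrt_le_sqrt hG1
    have hmcard : ((U.card : ℝ)) = (K : ℝ) - n_c := by
      have hc : (T ∩ Tb).card = n_c := by rw [Finset.inter_comm, hnc]
      have hnat : U.card + n_c = K := by
        rw [hU, ← hc, ← hK]; exact Finset.card_sdiff_add_card_inter T Tb
      have := congrArg (Nat.cast : ℕ → ℝ) hnat
      push_cast at this
      linarith
    rcases le_total U.card B with hUB | hUB
    · -- U.card ≤ B : take any J ⊇ U of card B
      obtain ⟨J, hUJ, _, hJc⟩ := Finset.exists_subsuperset_card_eq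
        (Finset.subset_univ U) hUB (by simpa [Finset.card_univ] using hBN)
      refine ⟨part1, J, hJc, ?_⟩
      rw [henw, henJ]
      have hGJ : G ≤ ∑ j ∈ J, g j ^ 2 :=
        Finset.sum_le_sum_of_subset_of_nonneg hUJ (fun j _ _ => sq_nonneg _)
      calc min (Real.sqrt ((B : ℝ) / ((K : ℝ) - n_c))) 1 * ((1 - δ) * Real.sqrt W)
          ≤ 1 * ((1 - δ) * Real.sqrt W) :=
            mul_le_mul_of_nonneg_right (min_le_right _ _) (le_of_lt hpos)
        _ = (1 - δ) * Real.sqrt W := one_mul _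
        _ ≤ Real.sqrt G := hsqG
        _ ≤ Real.sqrt (∑ j ∈ J, g j ^ 2) := Real.sqrt_le_sqrt hGJ
    · -- B ≤ U.card : take top-B subset of U
      obtain ⟨J, hJU, hJc, htop⟩ := top_subset U (fun j => g j ^ 2)
        (fun j => sq_nonneg _) B hB hUB
      refine ⟨part1, J, hJc, ?_⟩
      rw [henw, henJ]
      have hm0 : (0:ℝ) < U.card := by
        exact_mod_cast lt_of_lt_of_le hB hUB
      have hsum : (B : ℝ) / U.card * G ≤ ∑ j ∈ J, g j ^ 2 := by
        rw [div_mul_eq_mul_div, div_le_iff₀ hm0]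
        calc (B:ℝ) * G ≤ (U.card : ℝ) * ∑ j ∈ J, g j ^ 2 := htop
          _ = (∑ j ∈ J, g j ^ 2) * U.card := by ring
      calc min (Real.sqrt ((B : ℝ) / ((K : ℝ) - n_c))) 1 * ((1 - δ) * Real.sqrt W)
          ≤ Real.sqrt ((B : ℝ) / ((K : ℝ) - n_c)) * ((1 - δ) * Real.sqrt W) :=
            mul_le_mul_of_nonneg_right (min_le_left _ _) (le_of_lt hpos)
        _ = Real.sqrt ((B : ℝ) / U.card) * ((1 - δ) * Real.sqrt W) := by rw [hmcard]
        _ ≤ Real.sqrt ((B : ℝ) / U.card) * Real.sqrt G :=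
            mul_le_mul_of_nonneg_left hsqG (Real.sqrt_nonneg _)
        _ = Real.sqrt ((B : ℝ) / U.card * G) := (Real.sqrt_mul (by positivity) G).symm
        _ ≤ Real.sqrt (∑ j ∈ J, g j ^ 2) := Real.sqrt_le_sqrt hsum
  · -- trivial case : LHS ≤ 0
    obtain ⟨J₀, _, hJ₀c⟩ := Finset.exists_subset_card_eq
      (s := (Finset.univ : Finset (Fin N))) (n := B) (by simpa [Finset.card_univ] using hBN)
    refine ⟨part1, J₀, hJ₀c, ?_⟩
    rw [henw, henJ]
    push_neg at hpos
    exact le_trans (mul_nonpos_of_nonneg_of_nonpos hcnn hpos) (Real.sqrt_nonneg _)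
end

section
/- Let Φ ∈ ℝ^{M×N} be full spark, i.e., every set of at most M columns of Φ is linearly independent. Let x ∈ ℝ^N have support T with |T| = K and 2K ≤ M, and set y = Φx. Let S ⊆ {1,…,N} be a nonempty index set with |S| ≤ K, and let ẑ minimize ‖y − Φ_S z‖₂ over z ∈ ℝ^{|S|}. Then the residue y − Φ_S ẑ is zero if and only if T ⊆ S (equivalently, since |S| ≤ K = |T|, if and only if S = T). -/
open scoped BigOperators
open Matrix

/-- `Φ` is full spark: every set of at most `M` columns is linearly independent. -/
def FullSpark {M N : ℕ} (Φ : Matrix (Fin M) (Fin N) ℝ) : Prop :=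
  ∀ S : Finset (Fin N), S.card ≤ M →
    LinearIndependent ℝ (fun j : {j // j ∈ S} => fun i => Φ i j.val)

lemma enorm_eq_zero_iff {ι : Type*} [Fintype ι] (v : ι → ℝ) : _root_.enorm v = 0 ↔ v = 0 := by
  unfold _root_.enorm
  rw [Real.sqrt_eq_zero (by positivity)]
  constructor
  · intro h; funext i
    have := (Finset.sum_eq_zero_iff_of_nonneg (fun i _ => sq_nonneg (v i))).1 h i (Finset.mem_univ i)
    exact pow_eq_zero_iff (by norm_num) |>.1 this
  · intro h; simp [h]

lemma colSub_mulVec_eq {M N : ℕ} (Φ : Matrix (Fin M) (Fin N) ℝ) (S : Finset (Fin N))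
    (z : {j // j ∈ S} → ℝ) :
    (colSub Φ S).mulVec z = Φ.mulVec (fun j => if h : j ∈ S then z ⟨j, h⟩ else 0) := by
  funext i
  simp only [colSub, Matrix.mulVec, dotProduct, Matrix.of_apply]
  rw [show (∑ j, Φ i j * (if h : j ∈ S then z ⟨j, h⟩ else 0))
      = ∑ j ∈ S, Φ i j * (if h : j ∈ S then z ⟨j, h⟩ else 0) from
    (Finset.sum_subset (Finset.subset_univ S) (by intro j _ hj; simp [hj])).symm]
  rw [← Finset.sum_attach S (fun j => Φ i j * (if h : j ∈ S then z ⟨j, h⟩ else 0))]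
  apply Finset.sum_congr rfl
  intro j _
  simp [j.2]


theorem stmt_12 {M N : ℕ} (Φ : Matrix (Fin M) (Fin N) ℝ) (hΦ : FullSpark Φ)
    (x : Fin N → ℝ) (T : Finset (Fin N)) (hT : ∀ j, j ∈ T ↔ x j ≠ 0)
    (K : ℕ) (hK : T.card = K) (h2K : 2 * K ≤ M)
    (y : Fin M → ℝ) (hy : y = Φ.mulVec x)
    (S : Finset (Fin N)) (hS : S.Nonempty) (hSK : S.card ≤ K)
    (zhat : {j // j ∈ S} → ℝ)
    (hzhat : ∀ z : {j // j ∈ S} → ℝ,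
      _root_.enorm (y - (colSub Φ S).mulVec zhat) ≤ _root_.enorm (y - (colSub Φ S).mulVec z)) :
    y - (colSub Φ S).mulVec zhat = 0 ↔ T ⊆ S := by
  constructor
  · intro h
    -- extension of zhat to Fin N
    set ext : Fin N → ℝ := fun j => if hj : j ∈ S then zhat ⟨j, hj⟩ else 0 with hext
    have hzero : Φ.mulVec (x - ext) = 0 := by
      rw [Matrix.mulVec_sub, ← hy, ← colSub_mulVec_eq, sub_eq_zero]
      exact sub_eq_zero.mp h
    set U : Finset (Fin N) := T ∪ S with hU
    have hUcard : U.card ≤ M := by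
      calc U.card ≤ T.card + S.card := Finset.card_union_le T S
        _ ≤ K + K := by omega
        _ ≤ M := by omega
    have hLI := hΦ U hUcard
    have hvanish : ∀ j, j ∉ U → (x - ext) j = 0 := by
      intro j hj
      have hjT : j ∉ T := fun hh => hj (Finset.mem_union_left _ hh)
      have hjS : j ∉ S := fun hh => hj (Finset.mem_union_right _ hh)
      have hx0 : x j = 0 := by by_contra hc; exact hjT ((hT j).mpr hc)
      simp [hext, hx0, hjS]
    have hcoef : ∀ j : {j // j ∈ U}, (x - ext) j.val = 0 := by
      apply (Fintype.linearIndependent_iff.mp hLI)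
      funext i
      have : (∑ j : {j // j ∈ U}, (x - ext) j.val • fun i => Φ i j.val) i
          = Φ.mulVec (x - ext) i := by
        simp only [Finset.sum_apply, Pi.smul_apply, smul_eq_mul]
        rw [Matrix.mulVec, dotProduct]
        rw [show (∑ j, Φ i j * (x - ext) j) = ∑ j ∈ U, Φ i j * (x - ext) j from
          (Finset.sum_subset (Finset.subset_univ U)
            (by intro j _ hj; rw [hvanish j hj, mul_zero])).symm]
        rw [← Finset.sum_attach U (fun j => Φ i j * (x - ext) j)]
        exact Finset.sum_congr rfl (fun j _ => mul_comm _ _)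
      rw [this, hzero]
    intro j hjT
    by_contra hjS
    have hjU : j ∈ U := Finset.mem_union_left _ hjT
    have := hcoef ⟨j, hjU⟩
    have hx0 : x j = 0 := by
      simpa [hext, hjS] using this
    exact (hT j).mp hjT hx0
  · intro hTS
    set z0 : {j // j ∈ S} → ℝ := fun j => x j.val with hz0
    have hx : x = (fun j => if hj : j ∈ S then z0 ⟨j, hj⟩ else 0) := by
      funext j
      by_cases hj : j ∈ S
      · simp [hz0, hj]
      · have : x j = 0 := by
          by_contra hc
          exact hj (hTS ((hT j).mpr hc))
        simp [hj, this]
    have hres : y - (colSub Φ S).mulVec z0 = 0 := by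
      rw [colSub_mulVec_eq, ← hx, hy, sub_self]
    have h1 := hzhat z0
    rw [hres] at h1
    have h2 : _root_.enorm (0 : Fin M → ℝ) = 0 := by simp [_root_.enorm]
    have h3 : _root_.enorm (y - (colSub Φ S).mulVec zhat) ≤ 0 := by
      rw [h2] at h1; exact h1
    have h4 : 0 ≤ _root_.enorm (y - (colSub Φ S).mulVec zhat) := Real.sqrt_nonneg _
    exact (enorm_eq_zero_iff _).mp (le_antisymm h3 h4)
end
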